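/- arXiv:1809.04008 — 5 statements merged into one kernel-verified Lean document; each statement's English description precedes it below -/
import Mathlib

section
/- Let Γ₁ be a uniformly bounded, connected, amenable weighted graph, let Γ₂ be a weighted graph whose vertex set and edge set are finite, and suppose Γ₁ covers Γ₂. Let H₁ and H₂ be the Laplace-type operators of Γ₁ and Γ₂ on ℓ²(V₁) and ℓ²(V₂) respectively. Then σ(H₂) ⊆ σ(H₁). -/
noncomputable section

/-- A weighted graph: an edge set `E`, a vertex set `V`, an endpoint map `ends : E → Sym2 V`
(an edge `e` with `ends e = s(v, v)` is a loop), and a weight `wt v e ∈ ℂ` (only the values at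
incident pairs, i.e. with `v ∈ ends e`, are relevant). -/
structure WGraph (V E : Type*) where
  ends : E → Sym2 V
  wt : V → E → ℂ

namespace WGraph

variable {V E : Type*} (Γ : WGraph V E)

/-- The set `E_v` of edges incident to the vertex `v`. -/
def edgesAt (v : V) : Set E := {e | v ∈ Γ.ends e}

/-- The underlying simple graph: `u` and `v` are adjacent if they are distinct and joined
by some edge. Used to define paths, distance and connectivity. -/
def simple : SimpleGraph V where
  Adj u v := u ≠ v ∧ ∃ e, Γ.ends e = s(u, v)
  symm := by
    constructor
    intro u v h
    exact ⟨h.1.symm, h.2.imp fun e he => by rw [he, Sym2.eq_swap]⟩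
  loopless := ⟨fun v h => h.1 rfl⟩

/-- `Γ` is connected: any two vertices are joined by a finite path of edges. -/
def Connected : Prop := Γ.simple.Connected

/-- The ball of radius `n` around a vertex `v` in the graph metric. -/
def ball (v : V) (n : ℕ) : Set V := {u | Γ.simple.dist v u ≤ n}

/-- `B₁(F)`: vertices at distance at most `1` from the set `F`. -/
def onePlus (F : Set V) : Set V := {u | ∃ w ∈ F, Γ.simple.dist w u ≤ 1}

/-- `Γ` is uniformly bounded: uniformly bounded vertex degrees and uniformly bounded weights. -/
def UniformlyBounded : Prop :=
  (∃ D : ℕ, ∀ v, (Γ.edgesAt v).Finite ∧ (Γ.edgesAt v).ncard ≤ D) ∧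
    ∃ C : ℝ, ∀ v e, v ∈ Γ.ends e → ‖Γ.wt v e‖ ≤ C

/-- `Γ` is amenable: there is a Følner sequence of finite vertex sets. -/
def Amenable : Prop :=
  ∃ F : ℕ → Finset V, (∀ k, (F k).Nonempty) ∧ (∀ k, F k ⊆ F (k + 1)) ∧
    (⋃ k, (F k : Set V)) = Set.univ ∧
    Filter.Tendsto
      (fun k => (((Γ.onePlus (F k) \ (F k : Set V)).ncard : ℝ) / (F k).card))
      Filter.atTop (nhds 0)

/-- `Γ` has subexponential growth: `liminf |B_n(v)|^(1/n) = 1` for some vertex `v`. -/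
def SubexpGrowth : Prop :=
  ∃ v : V, Filter.liminf
    (fun n : ℕ => ((Γ.ball v n).ncard : ℝ) ^ ((n : ℝ)⁻¹)) Filter.atTop = 1

end WGraph

/-- A covering of weighted graphs: surjections on vertices and edges, compatible with the
endpoint maps, restricting to a bijection `E_v → E_{φ v}` for every vertex `v`, and
preserving the weights at incident pairs. -/
structure IsCovering {V₁ E₁ V₂ E₂ : Type*} (Γ₁ : WGraph V₁ E₁) (Γ₂ : WGraph V₂ E₂)
    (φV : V₁ → V₂) (φE : E₁ → E₂) : Prop where
  surj_vertex : Function.Surjective φV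
  surj_edge : Function.Surjective φE
  map_ends : ∀ e, Γ₂.ends (φE e) = (Γ₁.ends e).map φV
  bijOn_edgesAt : ∀ v : V₁, Set.BijOn φE (Γ₁.edgesAt v) (Γ₂.edgesAt (φV v))
  map_wt : ∀ v e, v ∈ Γ₁.ends e → Γ₁.wt v e = Γ₂.wt (φV v) (φE e)

open scoped ENNReal

/-- The Hilbert space `ℓ²(α)` of square-summable complex functions on `α`. -/
abbrev l2 (α : Type*) : Type _ := lp (fun _ : α => ℂ) 2


namespace HulAux

open WGraph Finset

variable {V E : Type*} (Γ : WGraph V E) [DecidableEq V]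

lemma other_eq {v u : V} {e : E} (h : v ∈ Γ.ends e) (he : Γ.ends e = s(v, u)) :
    Sym2.Mem.other h = u :=
  Sym2.congr_right.mp (by rw [Sym2.other_spec h, he])

variable (hfin : ∀ v, (Γ.edgesAt v).Finite)

/-- The neighbors of `v` (other endpoints of edges at `v`), as a `Finset`. -/
def nbhd (v : V) : Finset V :=
  ((hfin v).toFinset.attach).image
    (fun e => Sym2.Mem.other (show v ∈ Γ.ends e.1 from ((hfin v).mem_toFinset).mp e.2))

lemma mem_nbhd {v : V} {e : E} (h : v ∈ Γ.ends e) :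
    Sym2.Mem.other h ∈ nbhd Γ hfin v := by
  refine Finset.mem_image.mpr ⟨⟨e, (hfin v).mem_toFinset.mpr h⟩, Finset.mem_attach _ _, rfl⟩

lemma mem_nbhd_iff {v u : V} :
    u ∈ nbhd Γ hfin v ↔ ∃ e, ∃ h : v ∈ Γ.ends e, Sym2.Mem.other h = u := by
  constructor
  · intro hu
    obtain ⟨⟨e, he⟩, -, rfl⟩ := Finset.mem_image.mp hu
    exact ⟨e, _, rfl⟩
  · rintro ⟨e, h, rfl⟩
    exact mem_nbhd Γ hfin h

lemma nbhd_symm {v u : V} (h : u ∈ nbhd Γ hfin v) : v ∈ nbhd Γ hfin u := by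
  obtain ⟨e, he, rfl⟩ := (mem_nbhd_iff Γ hfin).mp h
  have hu : Sym2.Mem.other he ∈ Γ.ends e := Sym2.other_mem he
  have h2 : Sym2.Mem.other hu = v :=
    other_eq Γ hu ((Sym2.other_spec he).symm.trans Sym2.eq_swap)
  have := mem_nbhd Γ hfin hu
  rwa [h2] at this

lemma adj_mem_nbhd {v u : V} (h : Γ.simple.Adj v u) : u ∈ nbhd Γ hfin v := by
  obtain ⟨hne, e, he⟩ := h
  have hv : v ∈ Γ.ends e := by rw [he]; exact Sym2.mem_mk_left _ _
  exact (mem_nbhd_iff Γ hfin).mpr ⟨e, hv, other_eq Γ hv he⟩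

lemma mem_nbhd_cases {v u : V} (h : u ∈ nbhd Γ hfin v) : u = v ∨ Γ.simple.Adj v u := by
  obtain ⟨e, he, rfl⟩ := (mem_nbhd_iff Γ hfin).mp h
  by_cases hvu : Sym2.Mem.other he = v
  · exact Or.inl hvu
  · exact Or.inr ⟨Ne.symm hvu, e, (Sym2.other_spec he).symm⟩

lemma card_nbhd (v : V) : (nbhd Γ hfin v).card ≤ (Γ.edgesAt v).ncard := by
  calc (nbhd Γ hfin v).card ≤ (hfin v).toFinset.attach.card := Finset.card_image_le
    _ = (hfin v).toFinset.card := Finset.card_attach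
    _ = (Γ.edgesAt v).ncard := (Set.ncard_eq_toFinset_card _ (hfin v)).symm

/-- Iterated one-step neighborhood enlargement. -/
def grow : ℕ → Finset V → Finset V
  | 0, F => F
  | (n + 1), F => grow n F ∪ (grow n F).biUnion (nbhd Γ hfin)

lemma grow_subset_succ (n : ℕ) (F : Finset V) : grow Γ hfin n F ⊆ grow Γ hfin (n + 1) F :=
  Finset.subset_union_left

lemma subset_grow (n : ℕ) (F : Finset V) : F ⊆ grow Γ hfin n F := by
  induction n with
  | zero => exact subset_rfl
  | succ n ih => exact ih.trans (grow_subset_succ Γ hfin n F)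

lemma grow_mono {m n : ℕ} (h : m ≤ n) (F : Finset V) : grow Γ hfin m F ⊆ grow Γ hfin n F := by
  induction n with
  | zero => simpa [Nat.le_zero.mp h] using subset_rfl
  | succ n ih =>
    rcases Nat.lt_or_ge m (n+1) with h' | h'
    · exact (ih (Nat.lt_succ_iff.mp h')).trans (grow_subset_succ Γ hfin n F)
    · have : m = n + 1 := le_antisymm h h'
      subst this; exact subset_rfl

lemma mem_grow_succ {n : ℕ} {F : Finset V} {u w : V} (hu : u ∈ grow Γ hfin n F)
    (hw : w ∈ nbhd Γ hfin u) : w ∈ grow Γ hfin (n + 1) F :=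
  Finset.mem_union_right _ (Finset.mem_biUnion.mpr ⟨u, hu, hw⟩)

lemma grow_card {D : ℕ} (hD : ∀ v, (nbhd Γ hfin v).card ≤ D) (n : ℕ) (F : Finset V) :
    (grow Γ hfin n F).card ≤ (D + 1) ^ n * F.card := by
  induction n with
  | zero => simp [grow]
  | succ n ih =>
    calc (grow Γ hfin (n+1) F).card
        ≤ (grow Γ hfin n F).card + ((grow Γ hfin n F).biUnion (nbhd Γ hfin)).card :=
          Finset.card_union_le _ _
      _ ≤ (grow Γ hfin n F).card + ∑ a ∈ grow Γ hfin n F, (nbhd Γ hfin a).card :=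
          Nat.add_le_add_left (Finset.card_biUnion_le) _
      _ ≤ (grow Γ hfin n F).card + (grow Γ hfin n F).card * D := by
          gcongr
          exact (Finset.sum_le_card_nsmul _ _ D (fun a _ => hD a)).trans (by simp [mul_comm])
      _ = (D + 1) * (grow Γ hfin n F).card := by ring
      _ ≤ (D + 1) * ((D + 1) ^ n * F.card) := by gcongr
      _ = (D + 1) ^ (n + 1) * F.card := by ring

lemma walk_mem_grow_aux {v u : V} (p : Γ.simple.Walk v u) (F : Finset V) :
    ∀ k, v ∈ grow Γ hfin k F → u ∈ grow Γ hfin (k + p.length) F := by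
  induction p with
  | nil => intro k hv; simpa using hv
  | @cons a b c h q ih =>
    intro k hv
    have hb : b ∈ grow Γ hfin (k + 1) F := mem_grow_succ Γ hfin hv (adj_mem_nbhd Γ hfin h)
    have := ih (k + 1) hb
    have hidx : k + 1 + q.length = k + (SimpleGraph.Walk.cons h q).length := by
      rw [SimpleGraph.Walk.length_cons]; omega
    rwa [hidx] at this

lemma walk_mem_grow {v u : V} (p : Γ.simple.Walk v u) {F : Finset V} {n : ℕ}
    (hv : v ∈ F) (hn : p.length ≤ n) : u ∈ grow Γ hfin n F := by
  have := walk_mem_grow_aux Γ hfin p F 0 (by simpa [grow] using hv)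
  exact grow_mono Γ hfin (by omega : 0 + p.length ≤ n) F this

lemma mem_grow_exists_walk {u : V} {F : Finset V} :
    ∀ {n : ℕ}, u ∈ grow Γ hfin n F → ∃ v ∈ F, ∃ p : Γ.simple.Walk v u, p.length ≤ n := by
  intro n
  induction n generalizing u with
  | zero => intro hu; exact ⟨u, hu, SimpleGraph.Walk.nil, by simp⟩
  | succ n ih =>
    intro hu
    rcases Finset.mem_union.mp hu with hu | hu
    · obtain ⟨v, hv, p, hp⟩ := ih hu
      exact ⟨v, hv, p, hp.trans (Nat.le_succ n)⟩
    · obtain ⟨w, hw, huw⟩ := Finset.mem_biUnion.mp hu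
      obtain ⟨v, hv, p, hp⟩ := ih hw
      rcases mem_nbhd_cases Γ hfin huw with rfl | hadj
      · exact ⟨v, hv, p, hp.trans (Nat.le_succ n)⟩
      · exact ⟨v, hv, p.concat hadj, by
          rw [SimpleGraph.Walk.length_concat]; omega⟩

/-- Layer estimate: each new layer is contained in the neighborhood of the previous layer. -/
lemma grow_layer_subset (n : ℕ) (F : Finset V) :
    grow Γ hfin (n + 2) F \ grow Γ hfin (n + 1) F ⊆
      (grow Γ hfin (n + 1) F \ grow Γ hfin n F).biUnion (nbhd Γ hfin) := by
  intro u hu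
  obtain ⟨hu2, hu1⟩ := Finset.mem_sdiff.mp hu
  rcases Finset.mem_union.mp hu2 with h | h
  · exact absurd h hu1
  · obtain ⟨w, hw, huw⟩ := Finset.mem_biUnion.mp h
    refine Finset.mem_biUnion.mpr ⟨w, Finset.mem_sdiff.mpr ⟨hw, fun hwn => ?_⟩, huw⟩
    exact hu1 (mem_grow_succ Γ hfin hwn huw)

lemma boundary_bound {D : ℕ} (hD : ∀ v, (nbhd Γ hfin v).card ≤ D) (F : Finset V) :
    ∀ n : ℕ, (grow Γ hfin (n + 1) F \ F).card ≤ (D + 1) ^ n * (grow Γ hfin 1 F \ F).card := by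
  intro n
  induction n with
  | zero => simpa using le_rfl <;> simp
  | succ n ih =>
    have hsub : grow Γ hfin (n + 2) F \ F ⊆
        (grow Γ hfin (n + 1) F \ F) ∪ (grow Γ hfin (n + 2) F \ grow Γ hfin (n + 1) F) := by
      intro u hu
      obtain ⟨hu2, huF⟩ := Finset.mem_sdiff.mp hu
      by_cases h1 : u ∈ grow Γ hfin (n + 1) F
      · exact Finset.mem_union_left _ (Finset.mem_sdiff.mpr ⟨h1, huF⟩)
      · exact Finset.mem_union_right _ (Finset.mem_sdiff.mpr ⟨hu2, h1⟩)
    have hlayer : (grow Γ hfin (n + 2) F \ grow Γ hfin (n + 1) F).card ≤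
        D * (grow Γ hfin (n + 1) F \ F).card := by
      calc (grow Γ hfin (n + 2) F \ grow Γ hfin (n + 1) F).card
          ≤ ((grow Γ hfin (n + 1) F \ grow Γ hfin n F).biUnion (nbhd Γ hfin)).card :=
            Finset.card_le_card (grow_layer_subset Γ hfin n F)
        _ ≤ ∑ a ∈ grow Γ hfin (n + 1) F \ grow Γ hfin n F, (nbhd Γ hfin a).card :=
            Finset.card_biUnion_le
        _ ≤ (grow Γ hfin (n + 1) F \ grow Γ hfin n F).card * D :=
            (Finset.sum_le_card_nsmul _ _ D (fun a _ => hD a)).trans (by simp [mul_comm])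
        _ ≤ (grow Γ hfin (n + 1) F \ F).card * D := by
            gcongr
            exact subset_grow Γ hfin n F
        _ = D * (grow Γ hfin (n + 1) F \ F).card := mul_comm _ _
    calc (grow Γ hfin (n + 2) F \ F).card
        ≤ (grow Γ hfin (n + 1) F \ F).card
            + (grow Γ hfin (n + 2) F \ grow Γ hfin (n + 1) F).card :=
          (Finset.card_le_card hsub).trans (Finset.card_union_le _ _)
      _ ≤ (grow Γ hfin (n + 1) F \ F).card + D * (grow Γ hfin (n + 1) F \ F).card :=
          Nat.add_le_add_left hlayer _
      _ = (D + 1) * (grow Γ hfin (n + 1) F \ F).card := by ring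
      _ ≤ (D + 1) * ((D + 1) ^ n * (grow Γ hfin 1 F \ F).card) := by gcongr
      _ = (D + 1) ^ (n + 1) * (grow Γ hfin 1 F \ F).card := by ring

lemma onePlus_eq (hconn : Γ.Connected) (F : Finset V) :
    Γ.onePlus (F : Set V) = ↑(grow Γ hfin 1 F) := by
  ext u
  constructor
  · rintro ⟨w, hw, hd⟩
    interval_cases h : Γ.simple.dist w u
    · have : w = u := hconn.dist_eq_zero_iff.mp h
      subst this
      exact subset_grow Γ hfin 1 F hw
    · have hadj : Γ.simple.Adj w u := SimpleGraph.dist_eq_one_iff_adj.mp h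
      exact mem_grow_succ Γ hfin (by simpa [grow] using hw) (adj_mem_nbhd Γ hfin hadj)
  · intro hu
    rcases Finset.mem_union.mp hu with hu | hu
    · exact ⟨u, hu, by rw [SimpleGraph.dist_self]; omega⟩
    · obtain ⟨w, hw, huw⟩ := Finset.mem_biUnion.mp hu
      rcases mem_nbhd_cases Γ hfin huw with rfl | hadj
      · exact ⟨u, hw, by rw [SimpleGraph.dist_self]; omega⟩
      · exact ⟨w, hw, le_of_eq (SimpleGraph.dist_eq_one_iff_adj.mpr hadj)⟩

end HulAux

namespace HulAux

open WGraph

lemma l2_norm_sq {α : Type*} (x : lp (fun _ : α => ℂ) 2) :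
    ‖x‖ ^ 2 = ∑' i, ‖x i‖ ^ 2 := by
  have h := lp.norm_rpow_eq_tsum (p := 2) (E := fun _ : α => ℂ) (by norm_num) x
  have h2 : ((2 : ℝ≥0∞).toReal) = ((2 : ℕ) : ℝ) := by norm_num
  rw [h2] at h
  rw [Real.rpow_natCast] at h
  rw [h]
  congr 1
  ext i
  rw [Real.rpow_natCast]

lemma approx_mem_spectrum {X : Type*} [NormedAddCommGroup X] [NormedSpace ℂ X]
    (H : X →L[ℂ] X) (lam : ℂ)
    (h : ∀ ε : ℝ, 0 < ε → ∃ f : X, f ≠ 0 ∧ ‖H f - lam • f‖ ≤ ε * ‖f‖) :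
    lam ∈ spectrum ℂ H := by
  by_contra hs
  obtain ⟨u, hu⟩ := spectrum.notMem_iff.mp hs
  set T : X →L[ℂ] X := ↑u⁻¹ with hT
  obtain ⟨f, hf0, hf⟩ := h ((2 * (‖T‖ + 1))⁻¹) (by positivity)
  have h1 : T * ↑u = 1 := u.inv_mul
  have hfe : f = T ((algebraMap ℂ (X →L[ℂ] X) lam - H) f) := by
    rw [← hu]
    have := congrArg (fun (A : X →L[ℂ] X) => A f) h1
    simpa [ContinuousLinearMap.mul_apply] using this.symm
  have hAf : ‖(algebraMap ℂ (X →L[ℂ] X) lam - H) f‖ = ‖H f - lam • f‖ := by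
    rw [← norm_neg]
    congr 1
    simp [Algebra.algebraMap_eq_smul_one, ContinuousLinearMap.sub_apply]
  have hle : ‖f‖ ≤ ‖T‖ * ((2 * (‖T‖ + 1))⁻¹ * ‖f‖) := by
    calc ‖f‖ = ‖T ((algebraMap ℂ (X →L[ℂ] X) lam - H) f)‖ := by rw [← hfe]
      _ ≤ ‖T‖ * ‖(algebraMap ℂ (X →L[ℂ] X) lam - H) f‖ := T.le_opNorm _
      _ = ‖T‖ * ‖H f - lam • f‖ := by rw [hAf]
      _ ≤ ‖T‖ * ((2 * (‖T‖ + 1))⁻¹ * ‖f‖) :=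
          mul_le_mul_of_nonneg_left hf (norm_nonneg _)
  have hfpos : 0 < ‖f‖ := norm_pos_iff.mpr hf0
  have hTnn : (0:ℝ) ≤ ‖T‖ := norm_nonneg _
  have hd : (0:ℝ) < 2 * (‖T‖ + 1) := by positivity
  rw [inv_mul_eq_div, mul_div_assoc'] at hle
  have := (le_div_iff₀ hd).mp hle
  nlinarith

lemma exists_eigen {α : Type*} [Finite α] (H : l2 α →L[ℂ] l2 α) (lam : ℂ)
    (h : lam ∈ spectrum ℂ H) : ∃ g : l2 α, g ≠ 0 ∧ H g = lam • g := by
  haveI := Fintype.ofFinite α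
  let coeLm : l2 α →ₗ[ℂ] (α → ℂ) :=
    { toFun := fun f => ⇑f
      map_add' := fun f g => lp.coeFn_add f g
      map_smul' := fun c f => lp.coeFn_smul c f }
  haveI : FiniteDimensional ℂ (l2 α) :=
    FiniteDimensional.of_injective coeLm (fun f g hfg => lp.ext hfg)
  by_contra hc
  push_neg at hc
  set A : l2 α →L[ℂ] l2 α := algebraMap ℂ (l2 α →L[ℂ] l2 α) lam - H with hA
  have hinj : Function.Injective A := by
    have hker : ∀ z : l2 α, A z = 0 → z = 0 := by
      intro z hz
      by_contra hz0
      refine hc z hz0 ?_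
      have : lam • z - H z = 0 := by
        simpa [hA, Algebra.algebraMap_eq_smul_one, ContinuousLinearMap.sub_apply] using hz
      linear_combination (norm := module) -this
    intro x y hxy
    have : A (x - y) = 0 := by rw [map_sub, hxy, sub_self]
    have := hker _ this
    exact sub_eq_zero.mp this
  have hsurj : Function.Surjective A :=
    LinearMap.injective_iff_surjective.mp (show Function.Injective (A : l2 α →ₗ[ℂ] l2 α) from hinj)
  let e : l2 α ≃ₗ[ℂ] l2 α := LinearEquiv.ofBijective (A : l2 α →ₗ[ℂ] l2 α) ⟨hinj, hsurj⟩
  let E := e.toContinuousLinearEquiv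
  have hE : ∀ x, E x = A x := fun x => rfl
  refine absurd h (spectrum.notMem_iff.mpr ?_)
  refine ⟨⟨A, E.symm.toContinuousLinearMap, ?_, ?_⟩, rfl⟩
  · refine ContinuousLinearMap.ext fun x => ?_
    show A (E.symm x) = x
    rw [← hE]
    exact E.apply_symm_apply x
  · refine ContinuousLinearMap.ext fun x => ?_
    show E.symm (A x) = x
    rw [← hE]
    exact E.symm_apply_apply x

section Lift

variable {V₁ E₁ V₂ E₂ : Type*} {Γ₁ : WGraph V₁ E₁} {Γ₂ : WGraph V₂ E₂}
  {φV : V₁ → V₂} {φE : E₁ → E₂}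

/-- Walks in the base lift to walks of the same length upstairs. -/
lemma lift_walk (hcov : IsCovering Γ₁ Γ₂ φV φE) : ∀ (a w : V₂) (p : Γ₂.simple.Walk a w) (v₁ : V₁), φV v₁ = a →
    ∃ u, φV u = w ∧ ∃ q : Γ₁.simple.Walk v₁ u, q.length ≤ p.length := by
  intro a w p
  induction p with
  | nil => exact fun v₁ ha => ⟨v₁, ha, SimpleGraph.Walk.nil, by simp⟩
  | @cons a b c h p' ih =>
    intro v₁ ha
    obtain ⟨hne, e₂, he₂⟩ := h
    have ha2 : a ∈ Γ₂.ends e₂ := by rw [he₂]; exact Sym2.mem_mk_left _ _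
    have hmem : e₂ ∈ Γ₂.edgesAt (φV v₁) := by rw [ha]; exact ha2
    obtain ⟨e₁, he₁mem, he₁⟩ := (hcov.bijOn_edgesAt v₁).surjOn hmem
    have hv₁ : v₁ ∈ Γ₁.ends e₁ := he₁mem
    set u' := Sym2.Mem.other hv₁ with hu'
    have hends : Γ₁.ends e₁ = s(v₁, u') := (Sym2.other_spec hv₁).symm
    have hmap : s(a, b) = s(a, φV u') := by
      rw [← he₂, ← he₁, hcov.map_ends, hends, Sym2.map_pair_eq, ha]
    have hb : φV u' = b := (Sym2.congr_right.mp hmap).symm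
    have hadj : Γ₁.simple.Adj v₁ u' := by
      refine ⟨fun hvu => hne ?_, e₁, hends⟩
      rw [← ha, hvu, hb]
    obtain ⟨u, hu, q, hq⟩ := ih u' hb
    exact ⟨u, hu, SimpleGraph.Walk.cons hadj q, by
      rw [SimpleGraph.Walk.length_cons]; show _ ≤ p'.length + 1; omega⟩

/-- Reachability pushes forward along a covering. -/
lemma reach_push (hcov : IsCovering Γ₁ Γ₂ φV φE) (v u : V₁) (h : Γ₁.simple.Reachable v u) :
    Γ₂.simple.Reachable (φV v) (φV u) := by
  obtain ⟨p⟩ := h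
  induction p with
  | nil => exact SimpleGraph.Reachable.refl _
  | @cons a b c h p' ih =>
    refine SimpleGraph.Reachable.trans ?_ ih
    obtain ⟨hne, e, he⟩ := h
    by_cases hab : φV a = φV b
    · rw [hab]
    · exact SimpleGraph.Adj.reachable
        ⟨hab, φE e, by rw [hcov.map_ends, he, Sym2.map_pair_eq]⟩

end Lift

end HulAux

set_option maxHeartbeats 1000000

/-- weak Hulanicki theorem for graphs, amenable case.  Let `Γ₁` be a
uniformly bounded, connected, amenable weighted graph covering a finite weighted graph
`Γ₂`.  If `H₁`, `H₂` are the Laplace-type operators of `Γ₁`, `Γ₂`, then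
`σ(H₂) ⊆ σ(H₁)`. -/
theorem spectrum_subset_of_covering_amenable
    {V₁ E₁ V₂ E₂ : Type*} [Finite V₂] [Finite E₂]
    (Γ₁ : WGraph V₁ E₁) (Γ₂ : WGraph V₂ E₂)
    (hub : Γ₁.UniformlyBounded) (hconn : Γ₁.Connected) (hamen : Γ₁.Amenable)
    (φV : V₁ → V₂) (φE : E₁ → E₂) (hcov : IsCovering Γ₁ Γ₂ φV φE)
    (H₁ : l2 V₁ →L[ℂ] l2 V₁) (H₂ : l2 V₂ →L[ℂ] l2 V₂)
    (hH₁ : ∀ (f : l2 V₁) (v : V₁),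
      H₁ f v = ∑' e : {e : E₁ // v ∈ Γ₁.ends e}, Γ₁.wt v e.1 * f (Sym2.Mem.other e.2))
    (hH₂ : ∀ (f : l2 V₂) (v : V₂),
      H₂ f v = ∑' e : {e : E₂ // v ∈ Γ₂.ends e}, Γ₂.wt v e.1 * f (Sym2.Mem.other e.2)) :
    spectrum ℂ H₂ ⊆ spectrum ℂ H₁ := by
  classical
  intro lam hlam
  obtain ⟨g, hg0, hgeig⟩ := HulAux.exists_eigen H₂ lam hlam
  obtain ⟨⟨D, hDfin⟩, C, hC⟩ := hub
  have hfin : ∀ v, (Γ₁.edgesAt v).Finite := fun v => (hDfin v).1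
  have hD : ∀ v, (HulAux.nbhd Γ₁ hfin v).card ≤ D := fun v =>
    (HulAux.card_nbhd Γ₁ hfin v).trans (hDfin v).2
  set C' : ℝ := max C 0 with hC'def
  have hC' : ∀ v e, v ∈ Γ₁.ends e → ‖Γ₁.wt v e‖ ≤ C' :=
    fun v e hv => (hC v e hv).trans (le_max_left _ _)
  have hC'0 : 0 ≤ C' := le_max_right _ _
  have hw₂ex : ∃ w₂, g w₂ ≠ 0 := by
    by_contra hcontra
    push_neg at hcontra
    exact hg0 (lp.ext (funext hcontra))
  obtain ⟨w₂, hw₂⟩ := hw₂ex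
  haveI := Fintype.ofFinite V₂
  haveI := Fintype.ofFinite E₂
  set R : ℕ := (Finset.univ.sup fun a => Γ₂.simple.dist a w₂) + 1 with hRdef
  have hR1 : 1 ≤ R := Nat.le_add_left 1 _
  -- choice of a nearby preimage of w₂
  have hc : ∀ v : V₁, ∃ u : V₁, φV u = w₂ ∧ ∃ p : Γ₁.simple.Walk v u, p.length ≤ R := by
    intro v
    obtain ⟨w₁, hw₁⟩ := hcov.surj_vertex w₂
    have hreach : Γ₂.simple.Reachable (φV v) w₂ := by
      rw [← hw₁]
      exact HulAux.reach_push hcov v w₁ (SimpleGraph.Connected.preconnected hconn v w₁)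
    obtain ⟨p, hp⟩ := hreach.exists_walk_length_eq_dist
    have hplen : p.length ≤ R := by
      rw [hp, hRdef]
      exact le_trans
        (Finset.le_sup (f := fun a => Γ₂.simple.dist a w₂) (Finset.mem_univ (φV v)))
        (Nat.le_succ _)
    obtain ⟨u, hu, q, hq⟩ := HulAux.lift_walk hcov (φV v) w₂ p v rfl
    exact ⟨u, hu, q, hq.trans hplen⟩
  choose c hcφ hcw using hc
  obtain ⟨F, hFne, hFmono, hFunion, hFlim⟩ := hamen
  set G : ℝ := ‖g‖ with hGdef
  have hGv : ∀ w, ‖g w‖ ≤ G := fun w =>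
    lp.norm_apply_le_norm (by norm_num : (2 : ℝ≥0∞) ≠ 0) g w
  have hG0 : 0 ≤ G := norm_nonneg _
  set K₀ : ℝ := D * C' * G + ‖lam‖ * G with hK₀def
  have hK₀0 : 0 ≤ K₀ := by positivity
  set M : ℕ := (D + 1) ^ R with hMdef
  set G2 : ℝ := ‖g w₂‖ with hG2def
  have hG2pos : 0 < G2 := norm_pos_iff.mpr hw₂
  -- the cut-off functions
  set fS : Finset V₁ → l2 V₁ := fun S => ∑ v ∈ S, lp.single 2 v (g (φV v)) with hfSdef
  have hfS_apply : ∀ (S : Finset V₁) (u : V₁),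
      fS S u = if u ∈ S then g (φV u) else 0 := by
    intro S u
    rw [hfSdef]
    simp only [lp.coeFn_sum, Finset.sum_apply, lp.single_apply]
    simp only [Pi.single_apply]
    exact Finset.sum_ite_eq S u _
  have hfS_norm : ∀ S : Finset V₁, ‖fS S‖ ^ 2 = ∑ v ∈ S, ‖g (φV v)‖ ^ 2 := by
    intro S
    have h := lp.norm_sum_single (p := 2) (E := fun _ : V₁ => ℂ) (by norm_num)
      (fun v => g (φV v)) S
    have h2 : ((2 : ℝ≥0∞).toReal) = ((2 : ℕ) : ℝ) := by norm_num
    rw [h2] at h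
    simp only [Real.rpow_natCast] at h
    exact h
  -- approximate point spectrum argument
  apply HulAux.approx_mem_spectrum H₁ lam
  intro ε hε
  -- choose the Følner set
  have hδpos : 0 < ε ^ 2 * G2 ^ 2 / ((M * M : ℕ) * (K₀ ^ 2 + 1)) := by
    have : (0:ℝ) < (M * M : ℕ) := by
      have : 0 < M := by positivity
      positivity
    positivity
  set δ : ℝ := ε ^ 2 * G2 ^ 2 / ((M * M : ℕ) * (K₀ ^ 2 + 1)) with hδdef
  have hev : ∀ᶠ k in Filter.atTop,
      (((Γ₁.onePlus (F k) \ ((F k : Finset V₁) : Set V₁)).ncard : ℝ) / (F k).card) < δ :=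
    hFlim.eventually_lt_const hδpos
  obtain ⟨k, hk⟩ := hev.exists
  -- names
  set Fk := F k with hFkdef
  set S : Finset V₁ := HulAux.grow Γ₁ hfin R Fk with hSdef
  set Bd : Finset V₁ := HulAux.grow Γ₁ hfin (R + 1) Fk \ Fk with hBddef
  set T : Finset V₁ := S.filter (fun u => φV u = w₂) with hTdef
  set f : l2 V₁ := fS S with hfdef
  have hfapp : ∀ u, f u = if u ∈ S then g (φV u) else 0 := fun u => hfS_apply S u
  -- counting: Fk.card ≤ M * T.card
  have hcS : ∀ v ∈ Fk, c v ∈ T := by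
    intro v hv
    refine Finset.mem_filter.mpr ⟨?_, hcφ v⟩
    obtain ⟨p, hp⟩ := hcw v
    exact HulAux.walk_mem_grow Γ₁ hfin p hv hp
  have hcount : Fk.card ≤ M * T.card := by
    have himg : Fk.image c ⊆ T := by
      intro a ha
      obtain ⟨v, hv, rfl⟩ := Finset.mem_image.mp ha
      exact hcS v hv
    have hfib : ∀ a ∈ Fk.image c, (Fk.filter (fun v => c v = a)).card ≤ M := by
      intro a _
      have hsub : Fk.filter (fun v => c v = a) ⊆ HulAux.grow Γ₁ hfin R {a} := by
        intro v hv
        obtain ⟨-, hva⟩ := Finset.mem_filter.mp hv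
        obtain ⟨p, hp⟩ := hcw v
        have hlen : (p.reverse).length ≤ R := by
          rwa [SimpleGraph.Walk.length_reverse]
        have hmem := HulAux.walk_mem_grow Γ₁ hfin p.reverse
          (Finset.mem_singleton_self (c v)) hlen
        rwa [hva] at hmem
      calc (Fk.filter (fun v => c v = a)).card
          ≤ (HulAux.grow Γ₁ hfin R {a}).card := Finset.card_le_card hsub
        _ ≤ (D + 1) ^ R * ({a} : Finset V₁).card := HulAux.grow_card Γ₁ hfin hD R {a}
        _ = M := by rw [hMdef]; simp
    calc Fk.card ≤ M * (Fk.image c).card := Finset.card_le_mul_card_image Fk M hfib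
      _ ≤ M * T.card := Nat.mul_le_mul_left M (Finset.card_le_card himg)
  -- norm of f from below
  have hfnorm_lower : (T.card : ℝ) * G2 ^ 2 ≤ ‖f‖ ^ 2 := by
    rw [hfdef, hfS_norm S]
    have hcong : ∀ v ∈ T, ‖g (φV v)‖ ^ 2 = G2 ^ 2 := fun v hv => by
      rw [(Finset.mem_filter.mp hv).2, hG2def]
    calc (T.card : ℝ) * G2 ^ 2 = ∑ v ∈ T, ‖g (φV v)‖ ^ 2 := by
          rw [Finset.sum_congr rfl hcong]
          simp [mul_comm]
      _ ≤ ∑ v ∈ S, ‖g (φV v)‖ ^ 2 :=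
          Finset.sum_le_sum_of_subset_of_nonneg (Finset.filter_subset _ _)
            (fun v _ _ => by positivity)
  have hTpos : 0 < T.card := by
    have h1 : 0 < Fk.card := (hFne k).card_pos
    have h2 : 0 < M * T.card := lt_of_lt_of_le h1 hcount
    exact Nat.pos_of_ne_zero fun h0 => by simp [h0] at h2
  have hfpos : 0 < ‖f‖ := by
    have hTc : (0:ℝ) < (T.card : ℝ) := by exact_mod_cast hTpos
    have h1 : (0:ℝ) < (T.card : ℝ) * G2 ^ 2 := mul_pos hTc (pow_pos hG2pos 2)
    nlinarith [norm_nonneg f]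
  have hf0 : f ≠ 0 := norm_pos_iff.mp hfpos
  -- matching of other endpoints
  have hother : ∀ (v : V₁) (e : E₁) (hv : v ∈ Γ₁.ends e) (h2 : φV v ∈ Γ₂.ends (φE e)),
      Sym2.Mem.other h2 = φV (Sym2.Mem.other hv) := by
    intro v e hv h2
    refine HulAux.other_eq Γ₂ h2 ?_
    calc Γ₂.ends (φE e) = (Γ₁.ends e).map φV := hcov.map_ends e
      _ = (s(v, Sym2.Mem.other hv)).map φV :=
          congrArg (Sym2.map φV) (Sym2.other_spec hv).symm
      _ = s(φV v, φV (Sym2.Mem.other hv)) := Sym2.map_pair_eq _ _ _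
  -- good vertices
  have hgood : ∀ v, v ∈ S → HulAux.nbhd Γ₁ hfin v ⊆ S → H₁ f v = lam * f v := by
    intro v hvS hnb
    have heq2 : H₁ f v = H₂ g (φV v) := by
      rw [hH₁ f v, hH₂ g (φV v)]
      calc (∑' e : {e : E₁ // v ∈ Γ₁.ends e}, Γ₁.wt v e.1 * f (Sym2.Mem.other e.2))
          = ∑' e : {e : E₁ // v ∈ Γ₁.ends e},
              (fun e' : {e' : E₂ // φV v ∈ Γ₂.ends e'} =>
                Γ₂.wt (φV v) e'.1 * g (Sym2.Mem.other e'.2))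
              (((hcov.bijOn_edgesAt v).equiv φE :
                {e : E₁ // v ∈ Γ₁.ends e} ≃ {e' : E₂ // φV v ∈ Γ₂.ends e'}) e) := by
            refine tsum_congr fun e => ?_
            have h2 : φV v ∈ Γ₂.ends (φE e.1) :=
              (((hcov.bijOn_edgesAt v).equiv φE :
                {e : E₁ // v ∈ Γ₁.ends e} ≃ {e' : E₂ // φV v ∈ Γ₂.ends e'}) e).2
            have hsub : ((hcov.bijOn_edgesAt v).equiv φE :
                {e : E₁ // v ∈ Γ₁.ends e} ≃ {e' : E₂ // φV v ∈ Γ₂.ends e'}) e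
                = ⟨φE e.1, h2⟩ := Subtype.ext rfl
            rw [hsub]
            show Γ₁.wt v e.1 * f (Sym2.Mem.other e.2)
              = Γ₂.wt (φV v) (φE e.1) * g (Sym2.Mem.other h2)
            rw [hcov.map_wt v e.1 e.2, hfapp,
              if_pos (hnb (HulAux.mem_nbhd Γ₁ hfin e.2)), hother v e.1 e.2 h2]
        _ = ∑' e' : {e' : E₂ // φV v ∈ Γ₂.ends e'},
              Γ₂.wt (φV v) e'.1 * g (Sym2.Mem.other e'.2) :=
            Equiv.tsum_eq
              ((hcov.bijOn_edgesAt v).equiv φE :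
                {e : E₁ // v ∈ Γ₁.ends e} ≃ {e' : E₂ // φV v ∈ Γ₂.ends e'})
              (fun e' : {e' : E₂ // φV v ∈ Γ₂.ends e'} =>
                Γ₂.wt (φV v) e'.1 * g (Sym2.Mem.other e'.2))
    rw [heq2, hgeig, hfapp, if_pos hvS]
    simp [lp.coeFn_smul]
  -- zero far outside
  have hSsub : S ⊆ HulAux.grow Γ₁ hfin (R + 1) Fk := by
    rw [hSdef]
    exact HulAux.grow_mono Γ₁ hfin (Nat.le_succ R) Fk
  have hzero : ∀ v, v ∉ HulAux.grow Γ₁ hfin (R + 1) Fk → H₁ f v = 0 ∧ f v = 0 := by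
    intro v hv
    have hvS : v ∉ S := fun hmem => hv (hSsub hmem)
    have hfv : f v = 0 := by rw [hfapp v, if_neg hvS]
    refine ⟨?_, hfv⟩
    haveI : Fintype {e : E₁ // v ∈ Γ₁.ends e} := (hfin v).fintype
    rw [hH₁ f v, tsum_fintype]
    refine Finset.sum_eq_zero fun e _ => ?_
    have hoth : Sym2.Mem.other e.2 ∉ S := by
      intro hmem
      refine hv (HulAux.mem_grow_succ Γ₁ hfin (hSdef ▸ hmem)
        (HulAux.nbhd_symm Γ₁ hfin (HulAux.mem_nbhd Γ₁ hfin e.2)))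
    rw [hfapp (Sym2.Mem.other e.2), if_neg hoth, mul_zero]
  set Hf : l2 V₁ := H₁ f - lam • f with hHfdef
  have happ : ∀ v, Hf v = H₁ f v - lam * f v := by
    intro v
    rw [hHfdef]
    simp [lp.coeFn_sub, lp.coeFn_smul, Pi.sub_apply]
    rfl
  have hsupp : ∀ v, v ∉ Bd → Hf v = 0 := by
    intro v hv
    rw [happ v]
    by_cases hvF : v ∈ Fk
    · have hvS : v ∈ S := HulAux.subset_grow Γ₁ hfin R Fk hvF
      have hnb : HulAux.nbhd Γ₁ hfin v ⊆ S := by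
        intro u hu
        rw [hSdef]
        exact HulAux.grow_mono Γ₁ hfin hR1 Fk
          (HulAux.mem_grow_succ Γ₁ hfin
            (show v ∈ HulAux.grow Γ₁ hfin 0 Fk from hvF) hu)
      rw [hgood v hvS hnb, sub_self]
    · have hvout : v ∉ HulAux.grow Γ₁ hfin (R + 1) Fk := by
        intro hmem
        exact hv (by rw [hBddef]; exact Finset.mem_sdiff.mpr ⟨hmem, hvF⟩)
      obtain ⟨h1, h2⟩ := hzero v hvout
      rw [h1, h2, mul_zero, sub_zero]
  -- pointwise bound
  have hfle : ∀ u, ‖f u‖ ≤ G := by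
    intro u
    rw [hfapp u]
    split
    · exact hGv _
    · simpa using hG0
  have hbound : ∀ v, ‖Hf v‖ ≤ K₀ := by
    intro v
    rw [happ v]
    have h1 : ‖H₁ f v‖ ≤ D * C' * G := by
      haveI : Fintype {e : E₁ // v ∈ Γ₁.ends e} := (hfin v).fintype
      rw [hH₁ f v, tsum_fintype]
      calc ‖∑ e : {e : E₁ // v ∈ Γ₁.ends e}, Γ₁.wt v e.1 * f (Sym2.Mem.other e.2)‖
          ≤ ∑ e : {e : E₁ // v ∈ Γ₁.ends e}, ‖Γ₁.wt v e.1 * f (Sym2.Mem.other e.2)‖ :=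
            norm_sum_le _ _
        _ ≤ ∑ _e : {e : E₁ // v ∈ Γ₁.ends e}, C' * G := by
            refine Finset.sum_le_sum fun e _ => ?_
            rw [norm_mul]
            exact mul_le_mul (hC' v e.1 e.2) (hfle _) (norm_nonneg _) hC'0
        _ = (Fintype.card {e : E₁ // v ∈ Γ₁.ends e} : ℝ) * (C' * G) := by
            simp [Finset.sum_const, Finset.card_univ, nsmul_eq_mul]
        _ ≤ (D : ℝ) * (C' * G) := by
            have hcard : Fintype.card {e : E₁ // v ∈ Γ₁.ends e} ≤ D := by
              have hc1 : Nat.card {e : E₁ // v ∈ Γ₁.ends e} = (Γ₁.edgesAt v).ncard :=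
                Nat.card_coe_set_eq _
              rw [Nat.card_eq_fintype_card] at hc1
              rw [hc1]
              exact (hDfin v).2
            exact mul_le_mul_of_nonneg_right (Nat.cast_le.mpr hcard) (by positivity)
        _ = D * C' * G := by ring
    calc ‖H₁ f v - lam * f v‖ ≤ ‖H₁ f v‖ + ‖lam * f v‖ := norm_sub_le _ _
      _ ≤ D * C' * G + ‖lam‖ * G := by
          refine add_le_add h1 ?_
          rw [norm_mul]
          exact mul_le_mul_of_nonneg_left (hfle v) (norm_nonneg _)
      _ = K₀ := hK₀def.symm
  -- ℓ²-norm of Hf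
  have hh2 : ‖Hf‖ ^ 2 ≤ (Bd.card : ℝ) * K₀ ^ 2 := by
    rw [HulAux.l2_norm_sq Hf]
    have hts : ∑' v, ‖Hf v‖ ^ 2 = ∑ v ∈ Bd, ‖Hf v‖ ^ 2 :=
      tsum_eq_sum (fun v hv => by rw [hsupp v hv]; simp)
    rw [hts]
    calc ∑ v ∈ Bd, ‖Hf v‖ ^ 2 ≤ ∑ _v ∈ Bd, K₀ ^ 2 :=
          Finset.sum_le_sum fun v _ => pow_le_pow_left₀ (norm_nonneg _) (hbound v) 2
      _ = (Bd.card : ℝ) * K₀ ^ 2 := by simp [nsmul_eq_mul]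
  -- boundary count
  set β : ℝ := ((Γ₁.onePlus ((Fk : Finset V₁) : Set V₁) \ ((Fk : Finset V₁) : Set V₁)).ncard : ℝ)
    with hβdef
  have hβ0 : 0 ≤ β := by positivity
  have hBdcount : (Bd.card : ℝ) ≤ (M : ℝ) * β := by
    have h1 : Bd.card ≤ (D + 1) ^ R * (HulAux.grow Γ₁ hfin 1 Fk \ Fk).card := by
      rw [hBddef]
      exact HulAux.boundary_bound Γ₁ hfin hD Fk R
    have h2 : (Γ₁.onePlus ((Fk : Finset V₁) : Set V₁) \ ((Fk : Finset V₁) : Set V₁)).ncard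
        = (HulAux.grow Γ₁ hfin 1 Fk \ Fk).card := by
      rw [HulAux.onePlus_eq Γ₁ hfin hconn Fk, ← Finset.coe_sdiff, Set.ncard_coe_finset]
    rw [hβdef, h2, hMdef]
    exact_mod_cast h1
  have hFkpos : (0 : ℝ) < (Fk.card : ℝ) := by exact_mod_cast (hFne k).card_pos
  have hratio : β < δ * Fk.card := by
    have := (div_lt_iff₀ hFkpos).mp hk
    exact this
  have hMpos : 0 < M := by rw [hMdef]; positivity
  have hMR : (0:ℝ) < (M:ℝ) := by exact_mod_cast hMpos
  -- main estimate
  have hmain : ‖Hf‖ ^ 2 ≤ ε ^ 2 * ‖f‖ ^ 2 := by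
    calc ‖Hf‖ ^ 2 ≤ (Bd.card : ℝ) * K₀ ^ 2 := hh2
      _ ≤ ((M : ℝ) * β) * K₀ ^ 2 := by
          refine mul_le_mul_of_nonneg_right hBdcount (by positivity)
      _ ≤ ((M : ℝ) * (δ * Fk.card)) * K₀ ^ 2 := by
          refine mul_le_mul_of_nonneg_right ?_ (by positivity)
          exact mul_le_mul_of_nonneg_left hratio.le hMR.le
      _ ≤ ((M : ℝ) * (δ * ((M : ℝ) * T.card))) * K₀ ^ 2 := by
          refine mul_le_mul_of_nonneg_right ?_ (by positivity)
          refine mul_le_mul_of_nonneg_left ?_ hMR.le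
          refine mul_le_mul_of_nonneg_left ?_ hδpos.le
          exact_mod_cast hcount
      _ = (((M * M : ℕ) : ℝ) * δ) * K₀ ^ 2 * (T.card : ℝ) := by push_cast; ring
      _ ≤ (ε ^ 2 * G2 ^ 2) * (T.card : ℝ) := by
          refine mul_le_mul_of_nonneg_right ?_ (by positivity)
          rw [hδdef]
          have hMM : (0:ℝ) < ((M * M : ℕ) : ℝ) := by
            push_cast
            positivity
          have hK1 : (0:ℝ) < K₀ ^ 2 + 1 := by positivity
          rw [div_eq_mul_inv]
          have key : ((M * M : ℕ) : ℝ) * (ε ^ 2 * G2 ^ 2 * (((M * M : ℕ) : ℝ) * (K₀ ^ 2 + 1))⁻¹)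
              = ε ^ 2 * G2 ^ 2 * (K₀ ^ 2 + 1)⁻¹ := by
            field_simp
          rw [key]
          calc ε ^ 2 * G2 ^ 2 * (K₀ ^ 2 + 1)⁻¹ * K₀ ^ 2
              = ε ^ 2 * G2 ^ 2 * (K₀ ^ 2 / (K₀ ^ 2 + 1)) := by rw [div_eq_mul_inv]; ring
            _ ≤ ε ^ 2 * G2 ^ 2 * 1 := by
                refine mul_le_mul_of_nonneg_left ?_ (by positivity)
                rw [div_le_one hK1]
                linarith
            _ = ε ^ 2 * G2 ^ 2 := by ring
      _ = ε ^ 2 * ((T.card : ℝ) * G2 ^ 2) := by ring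
      _ ≤ ε ^ 2 * ‖f‖ ^ 2 := mul_le_mul_of_nonneg_left hfnorm_lower (by positivity)
  have hfinal : ‖Hf‖ ≤ ε * ‖f‖ := by
    have h2 : ‖Hf‖ ^ 2 ≤ (ε * ‖f‖) ^ 2 := by rw [mul_pow]; exact hmain
    have h3 := Real.sqrt_le_sqrt h2
    rwa [Real.sqrt_sq (norm_nonneg Hf), Real.sqrt_sq (by positivity)] at h3
  exact ⟨f, hf0, hfinal⟩

end
end

section
/- For every ω ∈ Ω and every n ∈ ℕ, the action of G_ω on the set {0,1}^n of binary words of length n is transitive: for all u, v ∈ {0,1}^n there exists g ∈ G_ω with g(u) = v. (Each of a, b_ω, c_ω, d_ω preserves word length, hence every element of G_ω permutes {0,1}^n.) -/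
noncomputable section

/-- Auxiliary "spinal" transformation: given a Bool-valued predicate `P` and a counter `n`,
walk along the word past leading `true`s (incrementing the counter); upon reaching the first
`false` (with counter value `n`), flip the next letter provided `P n` holds.  Words with no
`false`, or ending right after the first `false`, are fixed. -/
def spinal (P : ℕ → Bool) : ℕ → List Bool → List Bool
  | n, false :: x :: w => if P n then false :: (!x) :: w else false :: x :: w
  | n, true :: w => true :: spinal P (n + 1) w
  | _, w => w

theorem spinal_spinal (P : ℕ → Bool) : ∀ n w, spinal P n (spinal P n w) = w
  | _, [] => rfl
  | n, true :: w => by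
      simp only [spinal, spinal_spinal P (n + 1) w]
  | _, [false] => rfl
  | n, false :: x :: w => by
      by_cases h : P n <;> simp [spinal, h]

theorem spinal_involutive (P : ℕ → Bool) (n : ℕ) : Function.Involutive (spinal P n) :=
  fun w => spinal_spinal P n w

/-- The permutation `σ` of binary words determined by a predicate `P`: it flips the letter
following the first `false` of the word `1^(k) 0 x …` whenever `P (k+1)` holds. -/
def spinalPerm (P : ℕ → Bool) : Equiv.Perm (List Bool) :=
  (spinal_involutive P 1).toPerm

/-- The transformation flipping the first letter of a binary word. -/
def aFun : List Bool → List Bool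
  | [] => []
  | x :: w => (!x) :: w

theorem aFun_involutive : Function.Involutive aFun
  | [] => rfl
  | x :: w => by simp [aFun]

/-- The permutation `a` of binary words flipping the first letter. -/
def aPerm : Equiv.Perm (List Bool) := aFun_involutive.toPerm

/-- `σ_n` (`n ≥ 1`): flips the `(n+1)`-st letter of any word starting with `1^(n-1) 0` of
length at least `n+1`, and fixes all other words. -/
def sigmaPerm (n : ℕ) : Equiv.Perm (List Bool) := spinalPerm (fun m => m == n)

/-- `b_ω`: the (pointwise) product of the `σ_n` over all `n ≥ 1` with `ω n ∈ {0, 1}`. -/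
def bPerm (ω : ℕ → Fin 3) : Equiv.Perm (List Bool) :=
  spinalPerm (fun n => decide (ω n = 0 ∨ ω n = 1))

/-- `c_ω`: the (pointwise) product of the `σ_n` over all `n ≥ 1` with `ω n ∈ {0, 2}`. -/
def cPerm (ω : ℕ → Fin 3) : Equiv.Perm (List Bool) :=
  spinalPerm (fun n => decide (ω n = 0 ∨ ω n = 2))

/-- `d_ω`: the (pointwise) product of the `σ_n` over all `n ≥ 1` with `ω n ∈ {1, 2}`. -/
def dPerm (ω : ℕ → Fin 3) : Equiv.Perm (List Bool) :=
  spinalPerm (fun n => decide (ω n = 1 ∨ ω n = 2))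

/-- The group `G_ω`, i.e. the subgroup of the permutation group of binary words generated by
`a, b_ω, c_ω, d_ω`. -/
def Gomega (ω : ℕ → Fin 3) : Subgroup (Equiv.Perm (List Bool)) :=
  Subgroup.closure {aPerm, bPerm ω, cPerm ω, dPerm ω}

/-- `Ω₂`: at least two of the three symbols `0, 1, 2` occur infinitely often in `ω`
(positions indexed from `1`). -/
def OmegaTwo (ω : ℕ → Fin 3) : Prop :=
  ∃ i j : Fin 3, i ≠ j ∧ {n : ℕ | 1 ≤ n ∧ ω n = i}.Infinite ∧ {n : ℕ | 1 ≤ n ∧ ω n = j}.Infinite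

/-! ### Auxiliary lemmas for transitivity -/

/-- The orbit relation of `G_ω`. -/
def Orb (ω : ℕ → Fin 3) (u v : List Bool) : Prop := ∃ g ∈ Gomega ω, g u = v

lemma orb_refl (ω : ℕ → Fin 3) (u : List Bool) : Orb ω u u :=
  ⟨1, one_mem _, rfl⟩

lemma orb_symm {ω : ℕ → Fin 3} {u v : List Bool} (h : Orb ω u v) : Orb ω v u := by
  obtain ⟨g, hg, he⟩ := h
  exact ⟨g⁻¹, inv_mem hg, by simp [← he]⟩

lemma orb_trans {ω : ℕ → Fin 3} {u v w : List Bool} (h : Orb ω u v) (h' : Orb ω v w) :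
    Orb ω u w := by
  obtain ⟨g, hg, he⟩ := h
  obtain ⟨g', hg', he'⟩ := h'
  exact ⟨g' * g, mul_mem hg' hg, by simp [Equiv.Perm.mul_apply, he, he']⟩

lemma aPerm_mem (ω : ℕ → Fin 3) : aPerm ∈ Gomega ω :=
  Subgroup.subset_closure (by simp)

lemma bPerm_mem (ω : ℕ → Fin 3) : bPerm ω ∈ Gomega ω :=
  Subgroup.subset_closure (by simp)

lemma dPerm_mem (ω : ℕ → Fin 3) : dPerm ω ∈ Gomega ω :=
  Subgroup.subset_closure (by simp)

lemma spinal_replicate (P : ℕ → Bool) :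
    ∀ (j m : ℕ) (w : List Bool),
      spinal P m (List.replicate j true ++ w) = List.replicate j true ++ spinal P (m + j) w := by
  intro j
  induction j with
  | zero => intro m w; simp
  | succ j ih =>
      intro m w
      have : List.replicate (j + 1) true ++ w = true :: (List.replicate j true ++ w) := by
        simp [List.replicate_succ]
      rw [this]
      show true :: spinal P (m + 1) (List.replicate j true ++ w) = _
      rw [ih (m + 1) w]
      have : m + 1 + j = m + (j + 1) := by omega
      simp [this, List.replicate_succ]

lemma spinalPerm_apply (P : ℕ → Bool) (k : ℕ) (x : Bool) (w : List Bool) (hP : P (k + 1) = true) :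
    spinalPerm P (List.replicate k true ++ false :: x :: w)
      = List.replicate k true ++ false :: (!x) :: w := by
  have h1 : ⇑(spinalPerm P) = spinal P 1 := Function.Involutive.coe_toPerm _
  rw [h1, spinal_replicate P k 1]
  have : 1 + k = k + 1 := by omega
  rw [this]
  simp [spinal, hP]

/-- Flip the first letter. -/
lemma orb_flip_head (ω : ℕ → Fin 3) (x : Bool) (w : List Bool) :
    Orb ω (x :: w) ((!x) :: w) := by
  refine ⟨aPerm, aPerm_mem ω, ?_⟩
  have : ⇑aPerm = aFun := Function.Involutive.coe_toPerm _
  rw [this]; rfl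

/-- For every `k`, some generator acts as `σ_{k+1}`: it flips the letter after the first
`false` of a word starting with `1^k 0`. -/
lemma orb_sigma (ω : ℕ → Fin 3) (k : ℕ) (x : Bool) (w : List Bool) :
    Orb ω (List.replicate k true ++ false :: x :: w)
          (List.replicate k true ++ false :: (!x) :: w) := by
  by_cases h2 : ω (k + 1) = 2
  · refine ⟨dPerm ω, dPerm_mem ω, ?_⟩
    exact spinalPerm_apply _ k x w (by simp [h2])
  · refine ⟨bPerm ω, bPerm_mem ω, ?_⟩
    refine spinalPerm_apply _ k x w ?_
    have hlt : (ω (k + 1)).val < 3 := (ω (k + 1)).isLt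
    have hne : (ω (k + 1)).val ≠ 2 := by
      intro hc; exact h2 (Fin.ext hc)
    have : (ω (k + 1)).val = 0 ∨ (ω (k + 1)).val = 1 := by omega
    rcases this with h | h
    · simp [Or.inl (Fin.ext h : ω (k + 1) = 0)]
    · simp [Or.inr (Fin.ext h : ω (k + 1) = 1)]

/-- We can flip the letter after any prefix of `true`s. -/
lemma orb_flip (ω : ℕ → Fin 3) :
    ∀ (k : ℕ) (x : Bool) (w : List Bool),
      Orb ω (List.replicate k true ++ x :: w) (List.replicate k true ++ (!x) :: w) := by
  intro k
  induction k with
  | zero => intro x w; simpa using orb_flip_head ω x w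
  | succ k ih =>
      intro x w
      have hrw : ∀ y (r : List Bool),
          List.replicate (k + 1) true ++ y :: r
            = List.replicate k true ++ true :: y :: r := by
        intro y r
        rw [List.replicate_succ']
        simp
      rw [hrw x w, hrw (!x) w]
      have h1 : Orb ω (List.replicate k true ++ true :: x :: w)
          (List.replicate k true ++ false :: x :: w) := by
        simpa using ih true (x :: w)
      have h2 : Orb ω (List.replicate k true ++ false :: x :: w)
          (List.replicate k true ++ false :: (!x) :: w) := orb_sigma ω k x w
      have h3 : Orb ω (List.replicate k true ++ false :: (!x) :: w)
          (List.replicate k true ++ true :: (!x) :: w) := by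
        simpa using ih false ((!x) :: w)
      exact orb_trans (orb_trans h1 h2) h3

/-- Every word is in the orbit of the all-`true` word of the same length. -/
lemma orb_to_top (ω : ℕ → Fin 3) :
    ∀ (w : List Bool) (k : ℕ),
      Orb ω (List.replicate k true ++ w) (List.replicate (k + w.length) true) := by
  intro w
  induction w with
  | nil => intro k; simpa using orb_refl ω (List.replicate k true)
  | cons x r ih =>
      intro k
      have h1 : Orb ω (List.replicate k true ++ x :: r)
          (List.replicate k true ++ true :: r) := by
        cases x
        · simpa using orb_flip ω k false r
        · exact orb_refl ω _
      have hrw : List.replicate k true ++ true :: r = List.replicate (k + 1) true ++ r := by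
        rw [List.replicate_succ']
        simp
      have h2 : Orb ω (List.replicate k true ++ true :: r)
          (List.replicate (k + 1 + r.length) true) := by
        rw [hrw]; exact ih (k + 1)
      have : k + 1 + r.length = k + (x :: r).length := by simp; omega
      rw [this] at h2
      exact orb_trans h1 h2

/-- For every `ω ∈ Ω` and every `n`, the action of `G_ω` on binary words
of length `n` is transitive. -/
theorem Gomega_transitive (ω : ℕ → Fin 3) (n : ℕ) (u v : List Bool)
    (hu : u.length = n) (hv : v.length = n) :
    ∃ g ∈ Gomega ω, g u = v := by
  have h1 : Orb ω u (List.replicate n true) := by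
    have := orb_to_top ω u 0
    simpa [hu] using this
  have h2 : Orb ω v (List.replicate n true) := by
    have := orb_to_top ω v 0
    simpa [hv] using this
  exact orb_trans h1 (orb_symm h2)

end
end

section
/- The unique group homomorphism from the free group F₃ on three generators to Λ sending the three generators to the commutators ⁅a,b⁆, ⁅a,c⁆, ⁅a,d⁆ (where ⁅x,y⁆ = x y x⁻¹ y⁻¹) is injective, and its range equals the commutator subgroup of Λ. In particular, the commutator subgroup of Λ is a free group of rank 3, freely generated by ⁅a,b⁆, ⁅a,c⁆, ⁅a,d⁆. -/
noncomputable section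

/-- The defining relators of the group `Λ = ⟨a, b, c, d ∣ a², b², c², d², bcd⟩`
(generators indexed `a = 0`, `b = 1`, `c = 2`, `d = 3`). -/
def lambdaRels : Set (FreeGroup (Fin 4)) :=
  {FreeGroup.of 0 ^ 2, FreeGroup.of 1 ^ 2, FreeGroup.of 2 ^ 2, FreeGroup.of 3 ^ 2,
    FreeGroup.of 1 * FreeGroup.of 2 * FreeGroup.of 3}

/-- The group `Λ = ⟨a, b, c, d ∣ a², b², c², d², bcd⟩`. -/
abbrev Lambda := PresentedGroup lambdaRels

/-- The generator `a` of `Λ`. -/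
def La : Lambda := PresentedGroup.of 0
/-- The generator `b` of `Λ`. -/
def Lb : Lambda := PresentedGroup.of 1
/-- The generator `c` of `Λ`. -/
def Lc : Lambda := PresentedGroup.of 2
/-- The generator `d` of `Λ`. -/
def Ld : Lambda := PresentedGroup.of 3

open scoped commutatorElement

namespace LamAux

abbrev F := FreeGroup (Fin 3)

open FreeGroup

/-! ### The free group on three generators has trivial center -/

lemma reduce_toWord' (x : F) : reduce x.toWord = x.toWord := by
  conv_rhs => rw [← mk_toWord (x := x)]
  rw [toWord_mk]

lemma front_reduce (x : Fin 3 × Bool) (L : List (Fin 3 × Bool)) (hred : reduce L = L)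
    (hne : L ≠ []) (hh : (L.head hne).1 ≠ x.1) : reduce (x :: L) = x :: L := by
  cases L with
  | nil => exact absurd rfl hne
  | cons hd tl =>
    rw [reduce.cons, hred]
    simp only [List.head_cons] at hh
    simp [Ne.symm hh]

lemma toWord_of_mul (k : Fin 3) (b : Bool) (w : F) (hne : w.toWord ≠ [])
    (hh : ((w.toWord).head hne).1 ≠ k) :
    ((FreeGroup.mk [(k, b)]) * w).toWord = (k, b) :: w.toWord := by
  conv_lhs => rw [← mk_toWord (x := w)]
  rw [FreeGroup.mul_mk, List.singleton_append, toWord_mk]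
  exact front_reduce _ _ (reduce_toWord' w) hne hh

theorem eq_one_of_forall_comm (w : F) (h : ∀ u : F, w * u = u * w) : w = 1 := by
  by_contra hw
  have hL : w.toWord ≠ [] := fun hnil => hw (toWord_injective (by rw [hnil, toWord_one]))
  have hM : (w⁻¹).toWord ≠ [] := fun hnil => hw (by
    have : w⁻¹ = 1 := toWord_injective (by rw [hnil, toWord_one])
    simpa using congrArg (·⁻¹) this)
  have hex : ∀ i j : Fin 3, ∃ k : Fin 3, k ≠ i ∧ k ≠ j := by decide
  obtain ⟨k, hki, hkj⟩ := hex ((w.toWord).head hL).1 (((w⁻¹).toWord).head hM).1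
  have hofk : FreeGroup.of k = FreeGroup.mk [(k, true)] := rfl
  have hofk' : (FreeGroup.of k)⁻¹ = FreeGroup.mk [(k, false)] := by
    rw [hofk, FreeGroup.inv_mk]; rfl
  have e1 : (FreeGroup.of k * w).toWord = (k, true) :: w.toWord := by
    rw [hofk]; exact toWord_of_mul k true w hL hki.symm
  have e2 : ((FreeGroup.of k)⁻¹ * w⁻¹).toWord = (k, false) :: (w⁻¹).toWord := by
    rw [hofk']; exact toWord_of_mul k false w⁻¹ hM hkj.symm
  have e3 : (FreeGroup.of k)⁻¹ * w⁻¹ = (FreeGroup.of k * w)⁻¹ := by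
    rw [mul_inv_rev]
    exact (Commute.inv_left (h (FreeGroup.of k)⁻¹ : Commute w _)).eq.symm
  have e4 : ((FreeGroup.of k * w)⁻¹).toWord = (w⁻¹).toWord ++ [(k, false)] := by
    rw [toWord_inv, e1, toWord_inv]
    simp [FreeGroup.invRev]
  have e5 : (k, false) :: (w⁻¹).toWord = (w⁻¹).toWord ++ [(k, false)] := by
    rw [← e2, e3, e4]
  have hhead : ((k, false) :: (w⁻¹).toWord).head (by simp)
      = ((w⁻¹).toWord ++ [(k, false)]).head (by simp [hM]) := by
    congr 1
  rw [List.head_cons, List.head_append_of_ne_nil hM] at hhead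
  exact hkj (congrArg Prod.fst hhead)

/-! ### Automorphisms of `F` realizing the conjugation action of `Λ` on its
commutator subgroup -/

def X : F := FreeGroup.of 0
def Y : F := FreeGroup.of 1
def Z : F := FreeGroup.of 2

def Ahom : F →* F := FreeGroup.lift ![X⁻¹, Y⁻¹, Z⁻¹]
def Bhom : F →* F := FreeGroup.lift ![X⁻¹, X⁻¹ * Z, X⁻¹ * Y]
def Chom : F →* F := FreeGroup.lift ![Y⁻¹ * Z, Y⁻¹, Y⁻¹ * X]

lemma hAA : Ahom.comp Ahom = MonoidHom.id F := by
  apply FreeGroup.ext_hom; intro i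
  fin_cases i <;> simp [Ahom, X, Y, Z]

lemma hBB : Bhom.comp Bhom = MonoidHom.id F := by
  apply FreeGroup.ext_hom; intro i
  fin_cases i <;> simp [Bhom, X, Y, Z, mul_inv_rev]

lemma hCC : Chom.comp Chom = MonoidHom.id F := by
  apply FreeGroup.ext_hom; intro i
  fin_cases i <;> simp [Chom, X, Y, Z, mul_inv_rev]

def A : MulAut F :=
  { toFun := Ahom, invFun := Ahom,
    left_inv := fun u => DFunLike.congr_fun hAA u,
    right_inv := fun u => DFunLike.congr_fun hAA u,
    map_mul' := Ahom.map_mul }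

def B : MulAut F :=
  { toFun := Bhom, invFun := Bhom,
    left_inv := fun u => DFunLike.congr_fun hBB u,
    right_inv := fun u => DFunLike.congr_fun hBB u,
    map_mul' := Bhom.map_mul }

def C : MulAut F :=
  { toFun := Chom, invFun := Chom,
    left_inv := fun u => DFunLike.congr_fun hCC u,
    right_inv := fun u => DFunLike.congr_fun hCC u,
    map_mul' := Chom.map_mul }

lemma A_sq : A * A = 1 := by ext u; exact DFunLike.congr_fun hAA u
lemma B_sq : B * B = 1 := by ext u; exact DFunLike.congr_fun hBB u
lemma C_sq : C * C = 1 := by ext u; exact DFunLike.congr_fun hCC u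

lemma hBCCB : Bhom.comp (Chom.comp (Chom.comp Bhom)) = MonoidHom.id F := by
  apply FreeGroup.ext_hom; intro i
  fin_cases i <;> simp [Bhom, Chom, X, Y, Z, mul_inv_rev, mul_assoc]

def D : MulAut F := C * B

lemma hCBCB : Chom.comp (Bhom.comp (Chom.comp Bhom)) = MonoidHom.id F := by
  apply FreeGroup.ext_hom; intro i
  fin_cases i <;> simp [Bhom, Chom, X, Y, Z, mul_inv_rev, mul_assoc]

lemma D_sq : D * D = 1 := by
  ext u
  exact DFunLike.congr_fun hCBCB u

lemma BCD : B * C * D = 1 := by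
  ext u
  exact DFunLike.congr_fun hBCCB u

lemma hABAB : Ahom.comp (Bhom.comp (Ahom.comp Bhom)) = ((MulAut.conj X) : F ≃* F).toMonoidHom := by
  apply FreeGroup.ext_hom; intro i
  fin_cases i <;>
    simp [Ahom, Bhom, X, Y, Z, mul_inv_rev, mul_assoc, MulAut.conj_apply]

lemma hACAC : Ahom.comp (Chom.comp (Ahom.comp Chom)) = ((MulAut.conj Y) : F ≃* F).toMonoidHom := by
  apply FreeGroup.ext_hom; intro i
  fin_cases i <;>
    simp [Ahom, Chom, X, Y, Z, mul_inv_rev, mul_assoc, MulAut.conj_apply]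

lemma hADAD : Ahom.comp ((Chom.comp Bhom).comp (Ahom.comp (Chom.comp Bhom)))
    = ((MulAut.conj Z) : F ≃* F).toMonoidHom := by
  apply FreeGroup.ext_hom; intro i
  fin_cases i <;>
    simp [Ahom, Bhom, Chom, X, Y, Z, mul_inv_rev, mul_assoc, MulAut.conj_apply]

lemma A_inv : A⁻¹ = A := by rw [inv_eq_iff_mul_eq_one]; exact A_sq
lemma B_inv : B⁻¹ = B := by rw [inv_eq_iff_mul_eq_one]; exact B_sq
lemma C_inv : C⁻¹ = C := by rw [inv_eq_iff_mul_eq_one]; exact C_sq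
lemma D_inv : D⁻¹ = D := by rw [inv_eq_iff_mul_eq_one]; exact D_sq

lemma commAB : ⁅A, B⁆ = MulAut.conj X := by
  rw [commutatorElement_def, A_inv, B_inv]
  ext u
  exact DFunLike.congr_fun hABAB u

lemma commAC : ⁅A, C⁆ = MulAut.conj Y := by
  rw [commutatorElement_def, A_inv, C_inv]
  ext u
  exact DFunLike.congr_fun hACAC u

lemma commAD : ⁅A, D⁆ = MulAut.conj Z := by
  rw [commutatorElement_def, A_inv, D_inv]
  ext u
  exact DFunLike.congr_fun hADAD u

/-! ### The homomorphism `Λ →* MulAut F` -/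

def fLam : Fin 4 → MulAut F := ![A, B, C, D]

lemma rels_hold : ∀ r ∈ lambdaRels, FreeGroup.lift fLam r = 1 := by
  intro r hr
  simp only [lambdaRels, Set.mem_insert_iff, Set.mem_singleton_iff] at hr
  rcases hr with rfl | rfl | rfl | rfl | rfl <;>
    simp only [map_pow, _root_.map_mul, FreeGroup.lift_apply_of, fLam, Matrix.cons_val_zero,
      Matrix.cons_val_one, Matrix.head_cons, Matrix.cons_val_two, Matrix.tail_cons,
      Matrix.cons_val_three, sq]
  · exact A_sq
  · exact B_sq
  · exact C_sq
  · exact D_sq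
  · exact BCD

def Phi : Lambda →* MulAut F := PresentedGroup.toGroup rels_hold

lemma Phi_a : Phi La = A := by
  show Phi (PresentedGroup.of 0) = A
  rw [Phi, PresentedGroup.toGroup.of]; rfl

lemma Phi_b : Phi Lb = B := by
  show Phi (PresentedGroup.of 1) = B
  rw [Phi, PresentedGroup.toGroup.of]; rfl

lemma Phi_c : Phi Lc = C := by
  show Phi (PresentedGroup.of 2) = C
  rw [Phi, PresentedGroup.toGroup.of]; rfl

lemma Phi_d : Phi Ld = D := by
  show Phi (PresentedGroup.of 3) = D
  rw [Phi, PresentedGroup.toGroup.of]; rfl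

/-! ### The map `F →* Λ` and injectivity -/

def iota : F →* Lambda := FreeGroup.lift ![⁅La, Lb⁆, ⁅La, Lc⁆, ⁅La, Ld⁆]

lemma key : Phi.comp iota = MulAut.conj := by
  apply FreeGroup.ext_hom; intro i
  fin_cases i <;>
    simp only [MonoidHom.comp_apply, iota, FreeGroup.lift_apply_of, Matrix.cons_val_zero,
      Matrix.cons_val_one, Matrix.head_cons, Matrix.cons_val_two, Matrix.tail_cons,
      map_commutatorElement, Phi_a, Phi_b, Phi_c, Phi_d]
  · exact commAB
  · exact commAC
  · exact commAD

theorem iota_injective : Function.Injective iota := by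
  intro w v hwv
  have h1 : MulAut.conj w = MulAut.conj v := by
    have h := congrArg Phi hwv
    rw [← MonoidHom.comp_apply, ← MonoidHom.comp_apply, key] at h
    exact h
  have h3 : MulAut.conj (w * v⁻¹) = 1 := by
    rw [_root_.map_mul, _root_.map_inv, h1, mul_inv_cancel]
  have h4 : ∀ u : F, (w * v⁻¹) * u = u * (w * v⁻¹) := by
    intro u
    have h5 := DFunLike.congr_fun h3 u
    simp only [MulAut.conj_apply, MulAut.one_apply] at h5
    rw [mul_inv_eq_iff_eq_mul] at h5
    exact h5
  have := eq_one_of_forall_comm (w * v⁻¹) h4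
  rw [mul_inv_eq_one] at this
  exact this

/-! ### Relations in `Λ` -/

lemma rel_eq_one (r : FreeGroup (Fin 4)) (hr : r ∈ lambdaRels) :
    PresentedGroup.mk lambdaRels r = 1 :=
  (QuotientGroup.eq_one_iff _).2 (Subgroup.subset_normalClosure hr)

lemma sq_a : La * La = 1 := by
  have := rel_eq_one (FreeGroup.of 0 ^ 2) (by simp [lambdaRels])
  rwa [_root_.map_pow, sq] at this

lemma sq_b : Lb * Lb = 1 := by
  have := rel_eq_one (FreeGroup.of 1 ^ 2) (by simp [lambdaRels])
  rwa [_root_.map_pow, sq] at this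

lemma sq_c : Lc * Lc = 1 := by
  have := rel_eq_one (FreeGroup.of 2 ^ 2) (by simp [lambdaRels])
  rwa [_root_.map_pow, sq] at this

lemma sq_d : Ld * Ld = 1 := by
  have := rel_eq_one (FreeGroup.of 3 ^ 2) (by simp [lambdaRels])
  rwa [_root_.map_pow, sq] at this

lemma rel_bcd : Lb * Lc * Ld = 1 := by
  have := rel_eq_one (FreeGroup.of 1 * FreeGroup.of 2 * FreeGroup.of 3) (by simp [lambdaRels])
  rwa [_root_.map_mul, _root_.map_mul] at this

lemma inv_a : La⁻¹ = La := inv_eq_of_mul_eq_one_right sq_a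
lemma inv_b : Lb⁻¹ = Lb := inv_eq_of_mul_eq_one_right sq_b
lemma inv_c : Lc⁻¹ = Lc := inv_eq_of_mul_eq_one_right sq_c
lemma inv_d : Ld⁻¹ = Ld := inv_eq_of_mul_eq_one_right sq_d

lemma d_eq : Ld = Lc * Lb := by
  have h : Ld = (Lb * Lc)⁻¹ := eq_inv_of_mul_eq_one_right rel_bcd
  rw [h, mul_inv_rev, inv_b, inv_c]

lemma comm_bc : Lb * Lc = Lc * Lb := by
  have h : (Lc * Lb) * (Lc * Lb) = 1 := by rw [← d_eq]; exact sq_d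
  have h2 : Lc * Lb = (Lc * Lb)⁻¹ := eq_inv_of_mul_eq_one_right h
  rw [h2, mul_inv_rev, inv_b, inv_c]

lemma sa' (w : Lambda) : La * (La * w) = w := by rw [← mul_assoc, sq_a, one_mul]
lemma sb' (w : Lambda) : Lb * (Lb * w) = w := by rw [← mul_assoc, sq_b, one_mul]
lemma sc' (w : Lambda) : Lc * (Lc * w) = w := by rw [← mul_assoc, sq_c, one_mul]
lemma sbc' (w : Lambda) : Lb * (Lc * w) = Lc * (Lb * w) := by
  rw [← mul_assoc, ← mul_assoc, comm_bc]

/-! ### The image subgroup and its normality -/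

def S : Set Lambda := {⁅La, Lb⁆, ⁅La, Lc⁆, ⁅La, Ld⁆}

lemma range_eq : iota.range = Subgroup.closure S := by
  rw [iota, FreeGroup.range_lift_eq_closure]
  congr 1
  ext u
  constructor
  · rintro ⟨i, rfl⟩
    fin_cases i
    · exact Or.inl rfl
    · exact Or.inr (Or.inl rfl)
    · exact Or.inr (Or.inr rfl)
  · rintro (rfl | rfl | rfl)
    · exact ⟨0, rfl⟩
    · exact ⟨1, rfl⟩
    · exact ⟨2, rfl⟩

lemma memS_x : ⁅La, Lb⁆ ∈ Subgroup.closure S := Subgroup.subset_closure (Or.inl rfl)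
lemma memS_y : ⁅La, Lc⁆ ∈ Subgroup.closure S := Subgroup.subset_closure (Or.inr (Or.inl rfl))
lemma memS_z : ⁅La, Ld⁆ ∈ Subgroup.closure S := Subgroup.subset_closure (Or.inr (Or.inr rfl))

/-- conjugation stability for a single element. -/
lemma conj_mem (t : Lambda)
    (hS : ∀ s ∈ S, t * s * t⁻¹ ∈ Subgroup.closure S) :
    ∀ n ∈ Subgroup.closure S, t * n * t⁻¹ ∈ Subgroup.closure S := by
  intro n hn
  induction hn using Subgroup.closure_induction with
  | mem s hs => exact hS s hs
  | one => simpa using one_mem _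
  | mul a b _ _ ha hb =>
    have : t * (a * b) * t⁻¹ = (t * a * t⁻¹) * (t * b * t⁻¹) := by group
    rw [this]; exact mul_mem ha hb
  | inv a _ ha =>
    have : t * a⁻¹ * t⁻¹ = (t * a * t⁻¹)⁻¹ := by group
    rw [this]; exact inv_mem ha

lemma conj_a : ∀ n ∈ Subgroup.closure S, La * n * La⁻¹ ∈ Subgroup.closure S := by
  apply conj_mem
  rintro s (rfl | rfl | rfl)
  · have : La * ⁅La, Lb⁆ * La⁻¹ = ⁅La, Lb⁆⁻¹ := by
      simp only [commutatorElement_def, d_eq, inv_a, inv_b, inv_c, inv_d, mul_inv_rev,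
        mul_assoc, sa', sb', sc', sbc', comm_bc, sq_a, sq_b, sq_c, mul_one]
    rw [this]; exact inv_mem memS_x
  · have : La * ⁅La, Lc⁆ * La⁻¹ = ⁅La, Lc⁆⁻¹ := by
      simp only [commutatorElement_def, d_eq, inv_a, inv_b, inv_c, inv_d, mul_inv_rev,
        mul_assoc, sa', sb', sc', sbc', comm_bc, sq_a, sq_b, sq_c, mul_one]
    rw [this]; exact inv_mem memS_y
  · have : La * ⁅La, Ld⁆ * La⁻¹ = ⁅La, Ld⁆⁻¹ := by
      simp only [commutatorElement_def, d_eq, inv_a, inv_b, inv_c, inv_d, mul_inv_rev,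
        mul_assoc, sa', sb', sc', sbc', comm_bc, sq_a, sq_b, sq_c, mul_one]
    rw [this]; exact inv_mem memS_z

lemma conj_b : ∀ n ∈ Subgroup.closure S, Lb * n * Lb⁻¹ ∈ Subgroup.closure S := by
  apply conj_mem
  rintro s (rfl | rfl | rfl)
  · have : Lb * ⁅La, Lb⁆ * Lb⁻¹ = ⁅La, Lb⁆⁻¹ := by
      simp only [commutatorElement_def, d_eq, inv_a, inv_b, inv_c, inv_d, mul_inv_rev,
        mul_assoc, sa', sb', sc', sbc', comm_bc, sq_a, sq_b, sq_c, mul_one]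
    rw [this]; exact inv_mem memS_x
  · have : Lb * ⁅La, Lc⁆ * Lb⁻¹ = ⁅La, Lb⁆⁻¹ * ⁅La, Ld⁆ := by
      simp only [commutatorElement_def, d_eq, inv_a, inv_b, inv_c, inv_d, mul_inv_rev,
        mul_assoc, sa', sb', sc', sbc', comm_bc, sq_a, sq_b, sq_c, mul_one]
    rw [this]; exact mul_mem (inv_mem memS_x) memS_z
  · have : Lb * ⁅La, Ld⁆ * Lb⁻¹ = ⁅La, Lb⁆⁻¹ * ⁅La, Lc⁆ := by
      simp only [commutatorElement_def, d_eq, inv_a, inv_b, inv_c, inv_d, mul_inv_rev,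
        mul_assoc, sa', sb', sc', sbc', comm_bc, sq_a, sq_b, sq_c, mul_one]
    rw [this]; exact mul_mem (inv_mem memS_x) memS_y

lemma conj_c : ∀ n ∈ Subgroup.closure S, Lc * n * Lc⁻¹ ∈ Subgroup.closure S := by
  apply conj_mem
  rintro s (rfl | rfl | rfl)
  · have : Lc * ⁅La, Lb⁆ * Lc⁻¹ = ⁅La, Lc⁆⁻¹ * ⁅La, Ld⁆ := by
      simp only [commutatorElement_def, d_eq, inv_a, inv_b, inv_c, inv_d, mul_inv_rev,
        mul_assoc, sa', sb', sc', sbc', comm_bc, sq_a, sq_b, sq_c, mul_one]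
    rw [this]; exact mul_mem (inv_mem memS_y) memS_z
  · have : Lc * ⁅La, Lc⁆ * Lc⁻¹ = ⁅La, Lc⁆⁻¹ := by
      simp only [commutatorElement_def, d_eq, inv_a, inv_b, inv_c, inv_d, mul_inv_rev,
        mul_assoc, sa', sb', sc', sbc', comm_bc, sq_a, sq_b, sq_c, mul_one]
    rw [this]; exact inv_mem memS_y
  · have : Lc * ⁅La, Ld⁆ * Lc⁻¹ = ⁅La, Lc⁆⁻¹ * ⁅La, Lb⁆ := by
      simp only [commutatorElement_def, d_eq, inv_a, inv_b, inv_c, inv_d, mul_inv_rev,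
        mul_assoc, sa', sb', sc', sbc', comm_bc, sq_a, sq_b, sq_c, mul_one]
    rw [this]; exact mul_mem (inv_mem memS_y) memS_x

lemma conj_d : ∀ n ∈ Subgroup.closure S, Ld * n * Ld⁻¹ ∈ Subgroup.closure S := by
  apply conj_mem
  rintro s (rfl | rfl | rfl)
  · have : Ld * ⁅La, Lb⁆ * Ld⁻¹ = ⁅La, Ld⁆⁻¹ * ⁅La, Lc⁆ := by
      simp only [commutatorElement_def, d_eq, inv_a, inv_b, inv_c, inv_d, mul_inv_rev,
        mul_assoc, sa', sb', sc', sbc', comm_bc, sq_a, sq_b, sq_c, mul_one]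
    rw [this]; exact mul_mem (inv_mem memS_z) memS_y
  · have : Ld * ⁅La, Lc⁆ * Ld⁻¹ = ⁅La, Ld⁆⁻¹ * ⁅La, Lb⁆ := by
      simp only [commutatorElement_def, d_eq, inv_a, inv_b, inv_c, inv_d, mul_inv_rev,
        mul_assoc, sa', sb', sc', sbc', comm_bc, sq_a, sq_b, sq_c, mul_one]
    rw [this]; exact mul_mem (inv_mem memS_z) memS_x
  · have : Ld * ⁅La, Ld⁆ * Ld⁻¹ = ⁅La, Ld⁆⁻¹ := by
      simp only [commutatorElement_def, d_eq, inv_a, inv_b, inv_c, inv_d, mul_inv_rev,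
        mul_assoc, sa', sb', sc', sbc', comm_bc, sq_a, sq_b, sq_c, mul_one]
    rw [this]; exact inv_mem memS_z

lemma conj_all : ∀ g : Lambda, ∀ n ∈ Subgroup.closure S, g * n * g⁻¹ ∈ Subgroup.closure S := by
  intro g
  have hg : g ∈ Subgroup.closure (Set.range (PresentedGroup.of : Fin 4 → Lambda)) := by
    rw [PresentedGroup.closure_range_of]; trivial
  refine (Subgroup.closure_induction
    (p := fun g _ => (∀ n ∈ Subgroup.closure S, g * n * g⁻¹ ∈ Subgroup.closure S) ∧
      (∀ n ∈ Subgroup.closure S, g⁻¹ * n * g⁻¹⁻¹ ∈ Subgroup.closure S))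
    ?_ ?_ ?_ ?_ hg).1
  · rintro x ⟨i, rfl⟩
    fin_cases i
    · refine ⟨conj_a, ?_⟩
      show ∀ n ∈ Subgroup.closure S, La⁻¹ * n * La⁻¹⁻¹ ∈ Subgroup.closure S
      rw [inv_a]; exact conj_a
    · refine ⟨conj_b, ?_⟩
      show ∀ n ∈ Subgroup.closure S, Lb⁻¹ * n * Lb⁻¹⁻¹ ∈ Subgroup.closure S
      rw [inv_b]; exact conj_b
    · refine ⟨conj_c, ?_⟩
      show ∀ n ∈ Subgroup.closure S, Lc⁻¹ * n * Lc⁻¹⁻¹ ∈ Subgroup.closure S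
      rw [inv_c]; exact conj_c
    · refine ⟨conj_d, ?_⟩
      show ∀ n ∈ Subgroup.closure S, Ld⁻¹ * n * Ld⁻¹⁻¹ ∈ Subgroup.closure S
      rw [inv_d]; exact conj_d
  · exact ⟨fun n hn => by simpa using hn, fun n hn => by simpa using hn⟩
  · rintro x y _ _ ⟨hx1, hx2⟩ ⟨hy1, hy2⟩
    constructor
    · intro n hn
      have : (x * y) * n * (x * y)⁻¹ = x * (y * n * y⁻¹) * x⁻¹ := by group
      rw [this]; exact hx1 _ (hy1 n hn)
    · intro n hn
      have : (x * y)⁻¹ * n * ((x * y)⁻¹)⁻¹ = y⁻¹ * (x⁻¹ * n * x⁻¹⁻¹) * y⁻¹⁻¹ := by group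
      rw [this]; exact hy2 _ (hx2 n hn)
  · rintro x _ ⟨hx1, hx2⟩
    exact ⟨hx2, by simpa using hx1⟩

instance SNormal : (Subgroup.closure S).Normal := by
  constructor
  intro n hn g
  exact conj_all g n hn

/-! ### The quotient is abelian -/

lemma comm_gens : ∀ g ∈ ({La, Lb, Lc, Ld} : Set Lambda), ∀ h ∈ ({La, Lb, Lc, Ld} : Set Lambda),
    ⁅g, h⁆ ∈ Subgroup.closure S := by
  have comm_self : ∀ g : Lambda, ⁅g, g⁆ ∈ Subgroup.closure S := by
    intro g; rw [commutatorElement_self]; exact one_mem _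
  have one_of_comm : ∀ g h : Lambda, g * h = h * g → ⁅g, h⁆ ∈ Subgroup.closure S := by
    intro g h hc
    rw [commutatorElement_eq_one_iff_commute.mpr hc]; exact one_mem _
  have hbd : Lb * Ld = Ld * Lb := by
    simp only [d_eq, mul_assoc, sa', sb', sc', sbc', comm_bc, sq_a, sq_b, sq_c, mul_one]
  have hcd : Lc * Ld = Ld * Lc := by
    simp only [d_eq, mul_assoc, sa', sb', sc', sbc', comm_bc, sq_a, sq_b, sq_c, mul_one]
  have inv_mem' : ∀ g h : Lambda, ⁅g, h⁆ ∈ Subgroup.closure S →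
      ⁅h, g⁆ ∈ Subgroup.closure S := by
    intro g h hm
    rw [← commutatorElement_inv]; exact inv_mem hm
  rintro g (rfl | rfl | rfl | rfl) h (rfl | rfl | rfl | rfl)
  · exact comm_self _
  · exact memS_x
  · exact memS_y
  · exact memS_z
  · exact inv_mem' _ _ memS_x
  · exact comm_self _
  · exact one_of_comm _ _ comm_bc
  · exact one_of_comm _ _ hbd
  · exact inv_mem' _ _ memS_y
  · exact one_of_comm _ _ comm_bc.symm
  · exact comm_self _
  · exact one_of_comm _ _ hcd
  · exact inv_mem' _ _ memS_z
  · exact one_of_comm _ _ hbd.symm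
  · exact one_of_comm _ _ hcd.symm
  · exact comm_self _

lemma comm_in : ∀ g h : Lambda, ⁅g, h⁆ ∈ Subgroup.closure S := by
  let q := QuotientGroup.mk' (Subgroup.closure S)
  have hq : ∀ r : Lambda, q r = 1 ↔ r ∈ Subgroup.closure S := fun r =>
    QuotientGroup.eq_one_iff r
  have hgen : ∀ i j : Fin 4, Commute (q (PresentedGroup.of i)) (q (PresentedGroup.of j)) := by
    intro i j
    rw [← commutatorElement_eq_one_iff_commute, ← _root_.map_commutatorElement, hq]
    apply comm_gens <;> (fin_cases i <;> fin_cases j) <;> simp [La, Lb, Lc, Ld, S]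
  have hcomm : ∀ g h : Lambda, Commute (q g) (q h) := by
    intro g h
    have hg : g ∈ Subgroup.closure (Set.range (PresentedGroup.of : Fin 4 → Lambda)) := by
      rw [PresentedGroup.closure_range_of]; trivial
    have hh : h ∈ Subgroup.closure (Set.range (PresentedGroup.of : Fin 4 → Lambda)) := by
      rw [PresentedGroup.closure_range_of]; trivial
    refine Subgroup.closure_induction (p := fun g _ => ∀ h' : Lambda, Commute (q g) (q h'))
      ?_ ?_ ?_ ?_ hg h
    · rintro x ⟨i, rfl⟩ h'
      have hh' : h' ∈ Subgroup.closure (Set.range (PresentedGroup.of : Fin 4 → Lambda)) := by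
        rw [PresentedGroup.closure_range_of]; trivial
      refine Subgroup.closure_induction
        (p := fun h' _ => Commute (q (PresentedGroup.of i)) (q h')) ?_ ?_ ?_ ?_ hh'
      · rintro y ⟨j, rfl⟩; exact hgen i j
      · rw [_root_.map_one]; exact Commute.one_right _
      · intro a b _ _ ha hb; rw [_root_.map_mul]; exact ha.mul_right hb
      · intro a _ ha; rw [_root_.map_inv]; exact ha.inv_right
    · intro h'; rw [_root_.map_one]; exact Commute.one_left _
    · intro a b _ _ ha hb h'; rw [_root_.map_mul]; exact (ha h').mul_left (hb h')
    · intro a _ ha h'; rw [_root_.map_inv]; exact (ha h').inv_left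
  intro g h
  rw [← hq, _root_.map_commutatorElement]
  exact commutatorElement_eq_one_iff_commute.mpr (hcomm g h)

lemma range_eq_commutator : iota.range = commutator Lambda := by
  rw [range_eq]
  apply le_antisymm
  · rw [Subgroup.closure_le]
    rintro s (rfl | rfl | rfl) <;>
      exact Subgroup.commutator_mem_commutator (Subgroup.mem_top _) (Subgroup.mem_top _)
  · rw [commutator_def]
    exact Subgroup.commutator_le.2 fun g _ h _ => comm_in g h

end LamAux

/-- The homomorphism `F₃ → Λ` sending the three generators to
`⁅a,b⁆, ⁅a,c⁆, ⁅a,d⁆` is injective with range the commutator subgroup of `Λ`; in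
particular the commutator subgroup of `Λ` is free of rank `3`, freely generated by these
commutators. -/
theorem commutator_subgroup_lambda_free :
    Function.Injective (FreeGroup.lift ![⁅La, Lb⁆, ⁅La, Lc⁆, ⁅La, Ld⁆]) ∧
      (FreeGroup.lift ![⁅La, Lb⁆, ⁅La, Lc⁆, ⁅La, Ld⁆]).range = commutator Lambda := by
  exact ⟨LamAux.iota_injective, LamAux.range_eq_commutator⟩

end
end

section
/- Let D∞ be the infinite dihedral group, presented by generators s, t and relations s², t² (the quotient of the free group on s, t by the normal closure of {s², t²}), and let λ be its left regular representation on ℓ²(D∞), i.e. (λ(g)f)(h) = f(g⁻¹h). Then the spectrum of the bounded self-adjoint operator (1/4)·λ(s) + (1/2)·λ(t) + (1/4)·I on ℓ²(D∞) is contained in [−1/2, 0] ∪ [1/2, 1] (as a set of real numbers inside ℂ). -/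
noncomputable section

open scoped ENNReal

namespace l2

theorem two_toReal : ((2 : ℝ≥0∞)).toReal = 2 := by simp

theorem memℓp_comp {α : Type*} (e : α ≃ α) (f : ∀ _ : α, ℂ) (hf : Memℓp f 2) :
    Memℓp (fun x => f (e x)) 2 := by
  have h : (0:ℝ) < (2 : ℝ≥0∞).toReal := by norm_num
  rw [memℓp_gen_iff h] at hf ⊢
  exact (e.summable_iff (f := fun i => ‖f i‖ ^ (2 : ℝ≥0∞).toReal)).2 hf

/-- Composition with a bijection of the index set, as a bounded operator on `ℓ²`. -/
def compEquiv {α : Type*} (e : α ≃ α) : l2 α →L[ℂ] l2 α :=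
  LinearMap.mkContinuous
    { toFun := fun f => (⟨fun x => f (e x), memℓp_comp e f f.2⟩ : l2 α)
      map_add' := fun f g => by ext x; simp <;> rfl
      map_smul' := fun c f => by ext x; simp }
    1
    (by
      intro f
      have h : (0:ℝ) < (2 : ℝ≥0∞).toReal := by norm_num
      have h1 : ‖(⟨fun x => f (e x), memℓp_comp e f f.2⟩ : l2 α)‖
          = (∑' x, ‖f (e x)‖ ^ (2 : ℝ≥0∞).toReal) ^ (1 / (2 : ℝ≥0∞).toReal) :=
        lp.norm_eq_tsum_rpow h _
      have h2 : ‖f‖ = (∑' x, ‖f x‖ ^ (2 : ℝ≥0∞).toReal) ^ (1 / (2 : ℝ≥0∞).toReal) :=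
        lp.norm_eq_tsum_rpow h f
      show ‖(⟨fun x => f (e x), memℓp_comp e f f.2⟩ : l2 α)‖ ≤ 1 * ‖f‖
      rw [one_mul, h1, h2, e.tsum_eq (fun x => ‖f x‖ ^ (2 : ℝ≥0∞).toReal)])

@[simp] theorem compEquiv_apply {α : Type*} (e : α ≃ α) (f : l2 α) (x : α) :
    compEquiv e f x = f (e x) := rfl

end l2

/-- The left regular representation operator `λ(g)` on `ℓ²(G)`:
`(λ(g) f)(h) = f (g⁻¹ * h)`. -/
def lpTranslate {G : Type*} [Group G] (g : G) : l2 G →L[ℂ] l2 G :=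
  l2.compEquiv (Equiv.mulLeft g⁻¹)

@[simp] theorem lpTranslate_apply {G : Type*} [Group G] (g : G) (f : l2 G) (h : G) :
    lpTranslate g f h = f (g⁻¹ * h) := rfl

/-- The Markov operator on `ℓ²(G)` associated with `s₁ s₂ s₃ s₄ : G`:
`(M f)(h) = (1/4) * ∑ i, f (sᵢ⁻¹ * h)`. -/
def markovOp {G : Type*} [Group G] (s₁ s₂ s₃ s₄ : G) : l2 G →L[ℂ] l2 G :=
  ((4 : ℂ))⁻¹ • (lpTranslate s₁ + lpTranslate s₂ + lpTranslate s₃ + lpTranslate s₄)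

theorem markovOp_apply {G : Type*} [Group G] (s₁ s₂ s₃ s₄ : G) (f : l2 G) (h : G) :
    markovOp s₁ s₂ s₃ s₄ f h
      = (4 : ℂ)⁻¹ * (f (s₁⁻¹ * h) + f (s₂⁻¹ * h) + f (s₃⁻¹ * h) + f (s₄⁻¹ * h)) := by
  simp [markovOp, mul_add] <;> rfl

/-- The infinite dihedral group `D∞ = ⟨s, t ∣ s², t²⟩`. -/
abbrev DInf := PresentedGroup ({FreeGroup.of 0 ^ 2, FreeGroup.of 1 ^ 2} :
  Set (FreeGroup (Fin 2)))

/-- The generator `s` of `D∞`. -/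
def Ds : DInf := PresentedGroup.of 0
/-- The generator `t` of `D∞`. -/
def Dt : DInf := PresentedGroup.of 1

section Aux

theorem lpTranslate_mul' {G : Type*} [Group G] (g h : G) :
    lpTranslate (g * h) = lpTranslate g * lpTranslate h := by
  ext f x
  simp [mul_assoc]

theorem lpTranslate_one' {G : Type*} [Group G] :
    lpTranslate (1 : G) = 1 := by
  ext f x
  simp

theorem star_lpTranslate' {G : Type*} [Group G] (g : G) :
    star (lpTranslate (G := G) g) = lpTranslate g⁻¹ := by
  rw [ContinuousLinearMap.star_eq_adjoint]
  symm
  rw [ContinuousLinearMap.eq_adjoint_iff]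
  intro f k
  rw [lp.inner_eq_tsum, lp.inner_eq_tsum]
  have := (Equiv.mulLeft g).tsum_eq (fun h => (inner ℂ (f h) (k (g⁻¹ * h)) : ℂ))
  simpa using this

theorem lpTranslate_norm_le' {G : Type*} [Group G] (g : G) :
    ‖lpTranslate (G := G) g‖ ≤ 1 := by
  refine ContinuousLinearMap.opNorm_le_bound _ zero_le_one fun f => ?_
  rw [one_mul]
  have h : (0:ℝ) < (2 : ℝ≥0∞).toReal := by norm_num
  rw [lp.norm_eq_tsum_rpow h, lp.norm_eq_tsum_rpow h f]
  refine le_of_eq ?_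
  congr 1
  have := (Equiv.mulLeft g⁻¹).tsum_eq (fun x => ‖f x‖ ^ (2 : ℝ≥0∞).toReal)
  simpa using this

theorem Ds_mul_Ds : Ds * Ds = 1 := by
  have h : (Ds * Ds : DInf) = PresentedGroup.mk _ (FreeGroup.of 0 ^ 2) := by
    simp [Ds, PresentedGroup.of, sq, map_mul]
  rw [h]
  exact (QuotientGroup.eq_one_iff _).2 (Subgroup.subset_normalClosure (by simp))

theorem Dt_mul_Dt : Dt * Dt = 1 := by
  have h : (Dt * Dt : DInf) = PresentedGroup.mk _ (FreeGroup.of 1 ^ 2) := by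
    simp [Dt, PresentedGroup.of, sq, map_mul]
  rw [h]
  exact (QuotientGroup.eq_one_iff _).2 (Subgroup.subset_normalClosure (by simp))

instance : Nontrivial (l2 DInf) := by
  letI := Classical.decEq DInf
  refine ⟨lp.single 2 (1 : DInf) (1 : ℂ), 0, fun h => ?_⟩
  have h2 : (lp.single 2 (1 : DInf) (1 : ℂ) : ∀ _ : DInf, ℂ) 1 = 0 := by rw [h]; rfl
  simp [lp.single_apply] at h2

end Aux

set_option maxHeartbeats 1000000 in
/-- The spectrum of `(1/4)λ(s) + (1/2)λ(t) + (1/4)I` on `ℓ²(D∞)` is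
contained in `[-1/2, 0] ∪ [1/2, 1]` (as a set of real numbers inside `ℂ`). -/
theorem spectrum_dihedral_subset :
    spectrum ℂ
        ((4 : ℂ)⁻¹ • lpTranslate Ds + (2 : ℂ)⁻¹ • lpTranslate Dt
          + (4 : ℂ)⁻¹ • (1 : l2 DInf →L[ℂ] l2 DInf)) ⊆
      Complex.ofReal '' (Set.Icc (-(1 / 2) : ℝ) 0 ∪ Set.Icc (1 / 2) 1) := by
  classical
  set a : l2 DInf →L[ℂ] l2 DInf := lpTranslate Ds with ha_def
  set b : l2 DInf →L[ℂ] l2 DInf := lpTranslate Dt with hb_def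
  set A : l2 DInf →L[ℂ] l2 DInf :=
    (4 : ℂ)⁻¹ • a + (2 : ℂ)⁻¹ • b + (4 : ℂ)⁻¹ • 1 with hA_def
  have haa : a * a = 1 := by
    rw [ha_def, ← lpTranslate_mul', Ds_mul_Ds, lpTranslate_one']
  have hbb : b * b = 1 := by
    rw [hb_def, ← lpTranslate_mul', Dt_mul_Dt, lpTranslate_one']
  have hsa : IsSelfAdjoint A := by
    have hs : star a = a := by
      rw [ha_def, star_lpTranslate']
      congr 1
      rw [inv_eq_of_mul_eq_one_left Ds_mul_Ds]
    have ht : star b = b := by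
      rw [hb_def, star_lpTranslate']
      congr 1
      rw [inv_eq_of_mul_eq_one_left Dt_mul_Dt]
    rw [IsSelfAdjoint, hA_def]
    simp only [star_add, star_smul, hs, ht, star_one]
    norm_num
  have key : A * A - (2 : ℂ)⁻¹ • A - (4 : ℂ)⁻¹ • 1 = (8 : ℂ)⁻¹ • (a * b + b * a) := by
    rw [hA_def]
    simp only [add_mul, mul_add, smul_mul_assoc, mul_smul_comm, smul_smul, haa, hbb,
      mul_one, one_mul, smul_add]
    module
  have hnorm : ‖A * A - (2 : ℂ)⁻¹ • A - (4 : ℂ)⁻¹ • 1‖ ≤ 4⁻¹ := by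
    rw [key]
    have h1 : ‖a * b + b * a‖ ≤ 2 := by
      calc ‖a * b + b * a‖ ≤ ‖a * b‖ + ‖b * a‖ := norm_add_le _ _
        _ ≤ ‖a‖ * ‖b‖ + ‖b‖ * ‖a‖ := by
            gcongr <;> exact norm_mul_le _ _
        _ ≤ 1 * 1 + 1 * 1 := by
            gcongr <;> first
              | exact lpTranslate_norm_le' _
              | exact norm_nonneg _
        _ = 2 := by norm_num
    refine ContinuousLinearMap.opNorm_le_bound _ (by norm_num) fun f => ?_
    rw [ContinuousLinearMap.smul_apply]
    calc ‖(8 : ℂ)⁻¹ • ((a * b + b * a) f)‖ = 8⁻¹ * ‖(a * b + b * a) f‖ := by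
          rw [norm_smul]; norm_num
      _ ≤ 8⁻¹ * (‖a * b + b * a‖ * ‖f‖) := by
          have := ContinuousLinearMap.le_opNorm (a * b + b * a) f
          gcongr
      _ ≤ 8⁻¹ * (2 * ‖f‖) := by
          have h4 : ‖a * b + b * a‖ * ‖f‖ ≤ 2 * ‖f‖ :=
            mul_le_mul_of_nonneg_right h1 (norm_nonneg f)
          gcongr
      _ = 4⁻¹ * ‖f‖ := by ring
  intro z hz
  have hzre : z = (z.re : ℂ) := hsa.mem_spectrum_eq_re hz
  have hp : (z ^ 2 - (2 : ℂ)⁻¹ * z - (4 : ℂ)⁻¹) ∈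
      spectrum ℂ (A * A - (2 : ℂ)⁻¹ • A - (4 : ℂ)⁻¹ • 1) := by
    have h0 := spectrum.subset_polynomial_aeval A
      (Polynomial.X ^ 2 - Polynomial.C (2 : ℂ)⁻¹ * Polynomial.X - Polynomial.C (4 : ℂ)⁻¹)
      ⟨z, hz, rfl⟩
    have e1 : Polynomial.aeval A
        (Polynomial.X ^ 2 - Polynomial.C (2 : ℂ)⁻¹ * Polynomial.X - Polynomial.C (4 : ℂ)⁻¹)
        = A * A - (2 : ℂ)⁻¹ • A - (4 : ℂ)⁻¹ • 1 := by
      simp [sq, Algebra.smul_def]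
    have e2 : Polynomial.eval z
        (Polynomial.X ^ 2 - Polynomial.C (2 : ℂ)⁻¹ * Polynomial.X - Polynomial.C (4 : ℂ)⁻¹)
        = z ^ 2 - (2 : ℂ)⁻¹ * z - (4 : ℂ)⁻¹ := by
      simp
    rw [e1] at h0
    rw [← e2]
    exact h0
  have hbound : ‖z ^ 2 - (2 : ℂ)⁻¹ * z - (4 : ℂ)⁻¹‖ ≤ 4⁻¹ :=
    le_trans (spectrum.norm_le_norm_of_mem hp) hnorm
  set x : ℝ := z.re with hx_def
  have hzx : z = (x : ℂ) := hzre
  have hre : |x ^ 2 - 2⁻¹ * x - 4⁻¹| ≤ 4⁻¹ := by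
    have e3 : ((x ^ 2 - 2⁻¹ * x - 4⁻¹ : ℝ) : ℂ) = z ^ 2 - (2 : ℂ)⁻¹ * z - (4 : ℂ)⁻¹ := by
      rw [hzx]; push_cast; ring
    calc |x ^ 2 - 2⁻¹ * x - 4⁻¹| = ‖((x ^ 2 - 2⁻¹ * x - 4⁻¹ : ℝ) : ℂ)‖ := by
          rw [Complex.norm_real]; rfl
      _ ≤ 4⁻¹ := by rw [e3]; exact hbound
  rw [abs_le] at hre
  refine ⟨x, ?_, hzx.symm⟩
  obtain ⟨h1, h2⟩ := hre
  rcases le_or_gt x 0 with hx0 | hx0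
  · exact Or.inl ⟨by nlinarith, hx0⟩
  · exact Or.inr ⟨by nlinarith, by nlinarith⟩

end
end

section
/- Let Γ be a connected simple graph on a vertex set V in which every vertex has degree at most D (for some D ∈ ℕ), let v₀ ∈ V, and let B_n(v₀) denote the closed ball of radius n around v₀ in the graph metric. If liminf_{n→∞} |B_n(v₀)|^{1/n} = 1, then there is a strictly increasing sequence of natural numbers (n_k) such that the balls F_k = B_{n_k}(v₀) form a Følner sequence: ∪_k F_k = V and |B₁(F_k) ∖ F_k| / |F_k| → 0 as k → ∞, where B₁(F) denotes the set of vertices at graph distance at most 1 from the set F. -/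
open Filter Set

private lemma ncard_biUnion_le_aux {α : Type*} {s : Set α} (hs : s.Finite) (f : α → Set α)
    {m : ℕ} (hm : ∀ w, (f w).ncard ≤ m) :
    (⋃ w ∈ s, f w).ncard ≤ m * s.ncard := by
  refine Set.Finite.induction_on
    (motive := fun s _ => (⋃ w ∈ s, f w).ncard ≤ m * s.ncard) s hs (by simp) ?_
  intro a s ha hs ih
  rw [Set.biUnion_insert]
  calc (f a ∪ ⋃ w ∈ s, f w).ncard ≤ (f a).ncard + (⋃ w ∈ s, f w).ncard :=
        Set.ncard_union_le _ _
    _ ≤ m + m * s.ncard := add_le_add (hm a) ih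
    _ = m * (insert a s).ncard := by rw [Set.ncard_insert_of_notMem ha hs]; ring

private lemma exists_adj_of_dist_succ {V : Type*} {G : SimpleGraph V} (hconn : G.Connected)
    {v₀ u : V} {n : ℕ} (h : G.dist v₀ u = n + 1) :
    ∃ w, G.Adj w u ∧ G.dist v₀ w ≤ n := by
  obtain ⟨p, hp⟩ := (hconn v₀ u).exists_walk_length_eq_dist
  have hq : p.reverse.length = n + 1 := by
    rw [SimpleGraph.Walk.length_reverse, hp, h]
  cases hpr : p.reverse with
  | nil => rw [hpr] at hq; simp at hq
  | cons hadj q' =>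
    rw [hpr] at hq
    simp only [SimpleGraph.Walk.length_cons, Nat.add_right_cancel_iff] at hq
    refine ⟨_, hadj.symm, ?_⟩
    rw [SimpleGraph.dist_comm]
    exact hq ▸ SimpleGraph.dist_le q'

private lemma ball_finite_card {V : Type*} (G : SimpleGraph V) (hconn : G.Connected) (D : ℕ)
    (hdeg : ∀ v : V, (G.neighborSet v).Finite ∧ (G.neighborSet v).ncard ≤ D) (v₀ : V) :
    ∀ n : ℕ, ({u : V | G.dist v₀ u ≤ n}).Finite ∧
      ({u : V | G.dist v₀ u ≤ n}).ncard ≤ (D + 1) ^ n := by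
  intro n
  induction n with
  | zero =>
    have h0 : {u : V | G.dist v₀ u ≤ 0} = {v₀} := by
      ext u
      simp only [Set.mem_setOf_eq, Nat.le_zero, Set.mem_singleton_iff, hconn.dist_eq_zero_iff]
      exact comm
    rw [h0]; simp
  | succ n ih =>
    have hsub : {u : V | G.dist v₀ u ≤ n + 1} ⊆
        ⋃ w ∈ {u : V | G.dist v₀ u ≤ n}, insert w (G.neighborSet w) := by
      intro u hu
      by_cases hle : G.dist v₀ u ≤ n
      · exact Set.mem_biUnion hle (Set.mem_insert u _)
      · have hd : G.dist v₀ u = n + 1 := le_antisymm hu (by omega)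
        obtain ⟨w, hadj, hw⟩ := exists_adj_of_dist_succ hconn hd
        exact Set.mem_biUnion hw (Set.mem_insert_of_mem _ hadj)
    have hUfin : (⋃ w ∈ {u : V | G.dist v₀ u ≤ n}, insert w (G.neighborSet w)).Finite :=
      Set.Finite.biUnion ih.1 (fun w _ => ((hdeg w).1.insert w))
    refine ⟨hUfin.subset hsub, ?_⟩
    calc ({u : V | G.dist v₀ u ≤ n + 1}).ncard
        ≤ (⋃ w ∈ {u : V | G.dist v₀ u ≤ n}, insert w (G.neighborSet w)).ncard :=
          Set.ncard_le_ncard hsub hUfin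
      _ ≤ (D + 1) * ({u : V | G.dist v₀ u ≤ n}).ncard :=
          ncard_biUnion_le_aux ih.1 _
            (fun w => (Set.ncard_insert_le _ _).trans (by have := (hdeg w).2; omega))
      _ ≤ (D + 1) * (D + 1) ^ n := Nat.mul_le_mul_left _ ih.2
      _ = (D + 1) ^ (n + 1) := by ring

/-- In a connected simple graph of uniformly bounded degree with
subexponential growth (`liminf |B_n(v₀)|^(1/n) = 1`), there is a strictly increasing
sequence of radii `n k` such that the balls `B_{n k}(v₀)` form a Følner sequence. -/
theorem balls_foelner_of_subexponential {V : Type*} (G : SimpleGraph V)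
    (hconn : G.Connected) (D : ℕ)
    (hdeg : ∀ v : V, (G.neighborSet v).Finite ∧ (G.neighborSet v).ncard ≤ D)
    (v₀ : V)
    (hsub : Filter.liminf
      (fun n : ℕ => (({u : V | G.dist v₀ u ≤ n}.ncard : ℝ)) ^ ((n : ℝ)⁻¹))
      Filter.atTop = 1) :
    ∃ nk : ℕ → ℕ, StrictMono nk ∧
      (⋃ k, {u : V | G.dist v₀ u ≤ nk k}) = Set.univ ∧
      Filter.Tendsto
        (fun k =>
          (({u : V | ∃ w : V, G.dist v₀ w ≤ nk k ∧ G.dist w u ≤ 1} \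
              {u : V | G.dist v₀ u ≤ nk k}).ncard : ℝ) /
            ({u : V | G.dist v₀ u ≤ nk k}.ncard : ℝ))
        Filter.atTop (nhds 0) := by
  classical
  set b : ℕ → ℕ := fun n => ({u : V | G.dist v₀ u ≤ n}).ncard with hb
  have hfin : ∀ n, ({u : V | G.dist v₀ u ≤ n}).Finite :=
    fun n => (ball_finite_card G hconn D hdeg v₀ n).1
  have hcard : ∀ n, b n ≤ (D + 1) ^ n :=
    fun n => (ball_finite_card G hconn D hdeg v₀ n).2
  have hmono : ∀ n, {u : V | G.dist v₀ u ≤ n} ⊆ {u : V | G.dist v₀ u ≤ n + 1} :=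
    fun n u hu => le_trans hu n.le_succ
  have hone : ∀ n, 1 ≤ b n := by
    intro n
    have : v₀ ∈ {u : V | G.dist v₀ u ≤ n} := by simp [SimpleGraph.dist_self]
    exact (Set.ncard_pos (hfin n)).mpr ⟨v₀, this⟩
  have hbmono : ∀ n, b n ≤ b (n + 1) :=
    fun n => Set.ncard_le_ncard (hmono n) (hfin (n + 1))
  -- bound on the growth function
  set f : ℕ → ℝ := fun n => ((b n : ℝ)) ^ ((n : ℝ)⁻¹) with hf
  have hbound : ∀ n, f n ≤ (D : ℝ) + 1 := by
    intro n
    rcases Nat.eq_zero_or_pos n with hn | hn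
    · subst hn
      simp only [hf, Nat.cast_zero, inv_zero, Real.rpow_zero]
      have : (0 : ℝ) ≤ D := Nat.cast_nonneg D
      linarith
    · have h1 : (b n : ℝ) ≤ ((D : ℝ) + 1) ^ n := by
        have := hcard n
        calc (b n : ℝ) ≤ ((D + 1 : ℕ) ^ n : ℕ) := by exact_mod_cast this
          _ = ((D : ℝ) + 1) ^ n := by push_cast; ring
      have hD1 : (0 : ℝ) ≤ (D : ℝ) + 1 := by positivity
      calc f n ≤ (((D : ℝ) + 1) ^ n) ^ ((n : ℝ)⁻¹) :=
            Real.rpow_le_rpow (by positivity) h1 (by positivity)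
        _ = ((D : ℝ) + 1) ^ ((n : ℝ) * (n : ℝ)⁻¹) := by
            rw [← Real.rpow_natCast ((D : ℝ) + 1) n, ← Real.rpow_mul hD1]
        _ = (D : ℝ) + 1 := by
            rw [mul_inv_cancel₀ (by exact_mod_cast hn.ne' : (n : ℝ) ≠ 0), Real.rpow_one]
  -- key claim: ratios b(n+1)/b(n) come close to 1 infinitely often
  have key : ∀ ε : ℝ, 0 < ε → ∀ N : ℕ, ∃ n, N ≤ n ∧ (b (n + 1) : ℝ) < (1 + ε) * b n := by
    by_contra hcon
    push_neg at hcon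
    obtain ⟨ε, hε, N, hN⟩ := hcon
    have hgrow : ∀ m : ℕ, (1 + ε) ^ m ≤ (b (N + m) : ℝ) := by
      intro m
      induction m with
      | zero => simpa using (by exact_mod_cast hone N : (1 : ℝ) ≤ b N)
      | succ m ih =>
        have h1 := hN (N + m) (by omega)
        have h2 : (1 + ε) ^ (m + 1) = (1 + ε) * (1 + ε) ^ m := by ring
        have h3 : (1 + ε) * (1 + ε) ^ m ≤ (1 + ε) * b (N + m) :=
          mul_le_mul_of_nonneg_left ih (by linarith)
        rw [show N + (m + 1) = (N + m) + 1 by ring]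
        linarith
    set e : ℕ → ℝ := fun n => ((n - N : ℕ) : ℝ) * (n : ℝ)⁻¹ with he
    set g : ℕ → ℝ := fun n => (1 + ε) ^ (e n) with hg
    have hge : ∀ n, N ≤ n → g n ≤ f n := by
      intro n hn
      have h1 : ((1 + ε) ^ (n - N : ℕ) : ℝ) ≤ (b n : ℝ) := by
        have := hgrow (n - N)
        rwa [Nat.add_sub_cancel' hn] at this
      calc g n = (((1 + ε) ^ (n - N : ℕ) : ℝ)) ^ ((n : ℝ)⁻¹) := by
            rw [hg, he, ← Real.rpow_natCast (1 + ε) (n - N), ← Real.rpow_mul (by linarith)]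
        _ ≤ (b n : ℝ) ^ ((n : ℝ)⁻¹) :=
            Real.rpow_le_rpow (by positivity) h1 (by positivity)
    have hetend : Tendsto e atTop (nhds 1) := by
      have h1 : Tendsto (fun n : ℕ => 1 - (N : ℝ) / n) atTop (nhds 1) := by
        have := (tendsto_const_div_atTop_nhds_zero_nat (N : ℝ))
        have h2 := tendsto_const_nhds (x := (1 : ℝ)) (f := atTop (α := ℕ)) |>.sub this
        simpa using h2
      apply h1.congr'
      filter_upwards [eventually_ge_atTop (max N 1)] with n hn
      have hnN : N ≤ n := le_trans (le_max_left _ _) hn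
      have hn1 : (1 : ℕ) ≤ n := le_trans (le_max_right _ _) hn
      have hn0 : (n : ℝ) ≠ 0 := by exact_mod_cast (by omega : n ≠ 0)
      have hcast : ((n - N : ℕ) : ℝ) = (n : ℝ) - N := by
        rw [Nat.cast_sub hnN]
      simp only [he, hcast]
      field_simp
    have hgtend : Tendsto g atTop (nhds (1 + ε)) := by
      have := (tendsto_const_nhds (x := (1 + ε : ℝ)) (f := atTop (α := ℕ))).rpow hetend
        (Or.inl (by linarith))
      simpa [hg, Real.rpow_one] using this
    have hev : ∀ᶠ n in atTop, 1 + ε / 2 ≤ f n := by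
      have h1 : ∀ᶠ n in atTop, 1 + ε / 2 < g n :=
        hgtend.eventually (eventually_gt_nhds (by linarith))
      filter_upwards [h1, eventually_ge_atTop N] with n h2 h3
      exact le_of_lt (lt_of_lt_of_le h2 (hge n h3))
    have hcb : IsCoboundedUnder (· ≥ ·) atTop f :=
      isCoboundedUnder_ge_of_le atTop hbound
    have : 1 + ε / 2 ≤ liminf f atTop := le_liminf_of_le hcb hev
    rw [hsub] at this
    linarith
  -- construct the sequence
  have key' : ∀ k N : ℕ, ∃ n, N ≤ n ∧ (b (n + 1) : ℝ) < (1 + 1 / (k + 1)) * b n := by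
    intro k N
    exact key (1 / (k + 1)) (by positivity) N
  choose F hF1 hF2 using key'
  set nk : ℕ → ℕ := fun k => Nat.rec (F 0 0) (fun k ih => F (k + 1) (ih + 1)) k with hnk
  have hnksucc : ∀ k, nk (k + 1) = F (k + 1) (nk k + 1) := fun k => rfl
  have hsm : StrictMono nk := by
    apply strictMono_nat_of_lt_succ
    intro k
    rw [hnksucc]
    have := hF1 (k + 1) (nk k + 1)
    omega
  have hkey : ∀ k, (b (nk k + 1) : ℝ) < (1 + 1 / (k + 1)) * b (nk k) := by
    intro k
    cases k with
    | zero => exact hF2 0 0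
    | succ k => rw [hnksucc]; exact hF2 (k + 1) (nk k + 1)
  refine ⟨nk, hsm, ?_, ?_⟩
  · ext u
    simp only [Set.mem_iUnion, Set.mem_setOf_eq, Set.mem_univ, iff_true]
    exact ⟨G.dist v₀ u, hsm.le_apply⟩
  · apply squeeze_zero (g := fun k : ℕ => 1 / ((k : ℝ) + 1))
    · intro k
      positivity
    · intro k
      set n := nk k
      have hS : {u : V | ∃ w : V, G.dist v₀ w ≤ n ∧ G.dist w u ≤ 1} \
          {u : V | G.dist v₀ u ≤ n} ⊆
          {u : V | G.dist v₀ u ≤ n + 1} \ {u : V | G.dist v₀ u ≤ n} := by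
        rintro u ⟨⟨w, hw1, hw2⟩, hu2⟩
        refine ⟨?_, hu2⟩
        have := hconn.dist_triangle (u := v₀) (v := w) (w := u)
        simp only [Set.mem_setOf_eq]
        omega
      have hSfin : ({u : V | G.dist v₀ u ≤ n + 1} \ {u : V | G.dist v₀ u ≤ n}).Finite :=
        (hfin (n + 1)).diff
      have hc1 : ({u : V | ∃ w : V, G.dist v₀ w ≤ n ∧ G.dist w u ≤ 1} \
          {u : V | G.dist v₀ u ≤ n}).ncard ≤ b (n + 1) - b n := by
        calc _ ≤ ({u : V | G.dist v₀ u ≤ n + 1} \ {u : V | G.dist v₀ u ≤ n}).ncard :=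
              Set.ncard_le_ncard hS hSfin
          _ = b (n + 1) - b n := Set.ncard_diff (hmono n) (hfin n)
      have hbpos : (0 : ℝ) < b n := by exact_mod_cast hone n
      rw [div_le_iff₀ hbpos]
      have hc2 : (({u : V | ∃ w : V, G.dist v₀ w ≤ n ∧ G.dist w u ≤ 1} \
          {u : V | G.dist v₀ u ≤ n}).ncard : ℝ) ≤ (b (n + 1) : ℝ) - b n := by
        have := hbmono n
        calc _ ≤ ((b (n + 1) - b n : ℕ) : ℝ) := by exact_mod_cast hc1
          _ = (b (n + 1) : ℝ) - b n := by rw [Nat.cast_sub (hbmono n)]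
      have := hkey k
      nlinarith [hbpos]
    · have := tendsto_one_div_add_atTop_nhds_zero_nat (𝕜 := ℝ)
      simpa using this
end
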